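/- arXiv:1804.05254 — 8 statements merged into one kernel-verified Lean document; each statement's English description precedes it below -/
import Mathlib

section
/- Let m ≥ 2 be an integer. For every x > 0, the kernel K_m has the integral representation K_m(x) = ∫_ℝ ⋯ ∫_ℝ exp( −x^{1/m} ( e^{t_1} + ⋯ + e^{t_{m−1}} + e^{−(t_1 + ⋯ + t_{m−1})} ) ) dt_1 ⋯ dt_{m−1}, an iterated integral over ℝ^{m−1}. -/
open MeasureTheory

/-- The kernel `K_m`, defined recursively by `K_1(x) = e^{-x}` and
`K_{m+1}(x) = ∫_0^∞ K_m(x/t) e^{-t} dt/t` (Mellin convolution with `K_1`).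
The value for `m = 0` is junk. -/
noncomputable def Kker : ℕ → ℝ → ℝ
  | 0, _ => 0
  | 1, x => Real.exp (-x)
  | (m + 2), x => ∫ t in Set.Ioi (0 : ℝ), Kker (m + 1) (x / t) * Real.exp (-t) / t

open Set

/-- Auxiliary integrand. -/
noncomputable def gker (n : ℕ) (x : ℝ) (t : Fin n → ℝ) : ℝ :=
  Real.exp (-(∑ i, Real.exp (t i)) - x * Real.exp (-∑ i, t i))

lemma integrable_exp_neg_mul_abs {δ : ℝ} (hδ : 0 < δ) :
    Integrable fun s : ℝ => Real.exp (-δ * |s|) := by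
  have hI : IntegrableOn (fun s : ℝ => Real.exp (-δ * |s|)) (Ioi 0) :=
    (exp_neg_integrableOn_Ioi 0 hδ).congr_fun
      (fun s hs => by rw [abs_of_pos hs]) measurableSet_Ioi
  have hIic : IntegrableOn (fun s : ℝ => Real.exp (-δ * |s|)) (Iic 0) := by
    rw [← Measure.map_neg_eq_self (volume : Measure ℝ)]
    have m : MeasurableEmbedding fun x : ℝ => -x := (Homeomorph.neg ℝ).measurableEmbedding
    rw [m.integrableOn_map_iff]
    simp_rw [Function.comp_def, abs_neg, neg_preimage, neg_Iic, neg_zero]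
    exact (integrableOn_Ici_iff_integrableOn_Ioi).mpr hI
  have := hIic.union hI
  rwa [Iic_union_Ioi, integrableOn_univ] at this

lemma gker_le (n : ℕ) {x : ℝ} (hx : 0 < x) (t : Fin n → ℝ) :
    gker n x t ≤ ∏ i, Real.exp (-(x / (2 * (1 + x))) * |t i|) := by
  rw [← Real.exp_sum]
  unfold gker
  rw [Real.exp_le_exp]
  have key : (x / (2 * (1 + x))) * (∑ i, |t i|)
      ≤ (∑ i, Real.exp (t i)) + x * Real.exp (-∑ i, t i) := by
    set A := ∑ i, max (t i) 0 with hA'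
    set B := ∑ i, max (-(t i)) 0 with hB'
    have hA : 0 ≤ A := Finset.sum_nonneg fun i _ => le_max_right _ _
    have hB : 0 ≤ B := Finset.sum_nonneg fun i _ => le_max_right _ _
    have habs : ∑ i, |t i| = A + B := by
      rw [hA', hB', ← Finset.sum_add_distrib]
      exact Finset.sum_congr rfl fun i _ => (max_zero_add_max_neg_zero_eq_abs_self _).symm
    have h1 : A ≤ ∑ i, Real.exp (t i) := by
      refine Finset.sum_le_sum fun i _ => max_le ?_ (Real.exp_nonneg _)
      have := Real.add_one_le_exp (t i); linarith
    have hBA : B - A = -∑ i, t i := by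
      rw [hA', hB', ← Finset.sum_sub_distrib, ← Finset.sum_neg_distrib]
      exact Finset.sum_congr rfl fun i _ => by
        rcases le_total (t i) 0 with h | h
        · rw [max_eq_left (by linarith), max_eq_right h]; ring
        · rw [max_eq_right (by linarith), max_eq_left h]; ring
    have h2 : B - A ≤ Real.exp (-∑ i, t i) := by
      rw [hBA]; have := Real.add_one_le_exp (-∑ i, t i); linarith
    have hexp : (0:ℝ) ≤ Real.exp (-∑ i, t i) := (Real.exp_pos _).le
    have hsum : (0:ℝ) ≤ ∑ i, Real.exp (t i) :=
      Finset.sum_nonneg fun i _ => (Real.exp_nonneg _)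
    rw [habs, div_mul_eq_mul_div, div_le_iff₀ (by positivity)]
    nlinarith [mul_le_mul_of_nonneg_left h1 (by linarith : (0:ℝ) ≤ 2 * x),
      mul_le_mul_of_nonneg_left h2 hx.le, mul_nonneg hx.le hexp,
      mul_nonneg (mul_nonneg hx.le hx.le) hexp]
  have : ∑ i, -(x / (2 * (1 + x))) * |t i| = -((x / (2 * (1 + x))) * ∑ i, |t i|) := by
    rw [Finset.mul_sum]; simp [neg_mul]
  rw [this]
  linarith [key]

lemma integrable_gker (n : ℕ) {x : ℝ} (hx : 0 < x) : Integrable (gker n x) := by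
  have hδ : 0 < x / (2 * (1 + x)) := by positivity
  refine Integrable.mono'
    (Integrable.fin_nat_prod (f := fun _ (s : ℝ) => Real.exp (-(x / (2 * (1 + x))) * |s|))
      (fun i => integrable_exp_neg_mul_abs hδ)) ?_ ?_
  · apply Continuous.aestronglyMeasurable
    unfold gker
    fun_prop
  · refine ae_of_all _ fun t => ?_
    have h1 : ‖gker n x t‖ = gker n x t := by
      rw [Real.norm_eq_abs]; unfold gker; exact abs_of_pos (Real.exp_pos _)
    rw [h1]
    exact gker_le n hx t

lemma integral_Ioi_div (F : ℝ → ℝ) :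
    ∫ t in Set.Ioi (0:ℝ), F t / t = ∫ s : ℝ, F (Real.exp s) := by
  have h := integral_image_eq_integral_abs_deriv_smul MeasurableSet.univ
      (fun s _ => (Real.hasDerivAt_exp s).hasDerivWithinAt)
      (Real.exp_injective.injOn) (fun t => F t / t)
  rw [Set.image_univ, Real.range_exp] at h
  rw [h, setIntegral_univ]
  congr 1; funext s
  rw [smul_eq_mul, abs_of_pos (Real.exp_pos s), mul_comm,
    div_mul_cancel₀ _ (Real.exp_pos s).ne']

/-- The limiting iterated integral. -/
noncomputable def Hfun (n : ℕ) (x : ℝ) : ℝ := ∫ t : Fin n → ℝ, gker n x t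

lemma Kker_two (x : ℝ) (hx : 0 < x) : Kker 2 x = Hfun 1 x := by
  have h0 : Kker 2 x = ∫ t in Set.Ioi (0:ℝ), (Real.exp (-(x / t)) * Real.exp (-t)) / t := by
    show Kker (0 + 2) x = _
    rw [Kker]
    rfl
  rw [h0, integral_Ioi_div (fun t => Real.exp (-(x / t)) * Real.exp (-t))]
  have h1 : ∀ s : ℝ, Real.exp (-(x / Real.exp s)) * Real.exp (-Real.exp s)
      = Real.exp (-Real.exp s - x * Real.exp (-s)) := by
    intro s
    rw [← Real.exp_add]
    congr 1
    rw [Real.exp_neg]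
    field_simp
    ring
  simp only [h1]
  unfold Hfun
  have h2 := (volume_preserving_funUnique (Fin 1) ℝ).integral_comp
      (MeasurableEquiv.measurableEmbedding _)
      (fun s : ℝ => Real.exp (-Real.exp s - x * Real.exp (-s)))
  rw [← h2]
  congr 1; funext t
  unfold gker
  simp [Fin.sum_univ_one, MeasurableEquiv.funUnique_apply]

set_option maxHeartbeats 1000000 in
lemma Kker_step (n : ℕ) (x : ℝ) (hx : 0 < x)
    (ih : ∀ y : ℝ, 0 < y → Kker (n + 2) y = Hfun (n + 1) y) :
    Kker (n + 3) x = Hfun (n + 2) x := by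
  have h0 : Kker (n + 3) x
      = ∫ t in Set.Ioi (0:ℝ), (Kker (n + 2) (x / t) * Real.exp (-t)) / t := by
    show Kker (n + 1 + 2) x = _
    rw [Kker]
  rw [h0, integral_Ioi_div (fun t => Kker (n + 2) (x / t) * Real.exp (-t))]
  have h1 : ∀ s : ℝ, Kker (n + 2) (x / Real.exp s) * Real.exp (-Real.exp s)
      = ∫ t : Fin (n + 1) → ℝ, gker (n + 2) x (Fin.cons s t) := by
    intro s
    have hxe : (0:ℝ) < x * Real.exp (-s) := by positivity
    have hdiv : x / Real.exp s = x * Real.exp (-s) := by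
      rw [Real.exp_neg]; ring
    rw [hdiv, ih _ hxe]
    unfold Hfun
    rw [← integral_mul_const]
    congr 1; funext t
    unfold gker
    simp only [Fin.sum_univ_succ, Fin.cons_zero, Fin.cons_succ]
    rw [← Real.exp_add]
    congr 1
    set S := t 0 + ∑ i : Fin n, t i.succ with hS
    rw [neg_add s S, Real.exp_add]
    ring
  simp only [h1]
  -- Fubini and the measure preserving equivalence
  set e := MeasurableEquiv.piFinSuccAbove (fun _ : Fin (n + 2) => ℝ) 0 with he
  have hmp := volume_preserving_piFinSuccAbove (fun _ : Fin (n + 2) => ℝ) 0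
  set g' : ℝ × (Fin (n + 1) → ℝ) → ℝ := fun p => gker (n + 2) x (Fin.cons p.1 p.2) with hg'def
  have hcomp : ∀ u : Fin (n + 2) → ℝ, g' (e u) = gker (n + 2) x u := by
    intro u
    rw [hg'def, he]
    simp only [MeasurableEquiv.piFinSuccAbove_apply]
    congr 1
    funext i
    refine Fin.cases ?_ ?_ i
    · simp
    · intro j
      simp only [Fin.cons_succ]
      rfl
  have hInt : Integrable (gker (n + 2) x) := integrable_gker _ hx
  have hg' : Integrable g' := by
    refine (hmp.integrable_comp_emb (MeasurableEquiv.measurableEmbedding e)).mp ?_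
    have : g' ∘ e = gker (n + 2) x := funext hcomp
    rw [this]; exact hInt
  have hg'' : Integrable (Function.uncurry fun s t => g' (s, t)) (volume.prod volume) := by
    rw [← Measure.volume_eq_prod]
    exact hg'
  have hfub := integral_integral hg''
  rw [show (fun s => ∫ t : Fin (n + 1) → ℝ, gker (n + 2) x (Fin.cons s t))
    = fun s => ∫ t : Fin (n + 1) → ℝ, g' (s, t) from rfl]
  rw [hfub]
  have h2 := hmp.integral_comp (MeasurableEquiv.measurableEmbedding e) g'
  rw [← Measure.volume_eq_prod, ← h2]
  unfold Hfun
  congr 1; funext u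
  exact hcomp u

lemma Kker_eq_Hfun : ∀ n : ℕ, ∀ x : ℝ, 0 < x → Kker (n + 2) x = Hfun (n + 1) x := by
  intro n
  induction n with
  | zero => exact fun x hx => Kker_two x hx
  | succ n ih => exact fun x hx => Kker_step n x hx ih

lemma Hfun_eq (n : ℕ) {x : ℝ} (hx : 0 < x) :
    Hfun (n + 1) x = ∫ t : Fin (n + 1) → ℝ,
      Real.exp (-(x ^ ((1 : ℝ) / ((n : ℝ) + 2))) *
        ((∑ i, Real.exp (t i)) + Real.exp (-∑ i, t i))) := by
  have hne : (n : ℝ) + 2 ≠ 0 := by positivity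
  set c : ℝ := Real.log x / ((n : ℝ) + 2) with hc
  have hxc : x ^ ((1 : ℝ) / ((n : ℝ) + 2)) = Real.exp c := by
    rw [Real.rpow_def_of_pos hx, hc]; congr 1; ring
  have h3 : x * Real.exp (-(((n : ℝ) + 1) * c)) = Real.exp c := by
    nth_rewrite 1 [← Real.exp_log hx]
    rw [← Real.exp_add, hc]
    congr 1
    field_simp
    ring
  have key : ∀ t : Fin (n + 1) → ℝ, gker (n + 1) x (t + fun _ : Fin (n + 1) => c) =
      Real.exp (-(x ^ ((1 : ℝ) / ((n : ℝ) + 2))) *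
        ((∑ i, Real.exp (t i)) + Real.exp (-∑ i, t i))) := by
    intro t
    unfold gker
    rw [hxc]
    congr 1
    have h1 : ∑ i, Real.exp ((t + fun _ : Fin (n + 1) => c) i) = Real.exp c * ∑ i, Real.exp (t i) := by
      simp only [Pi.add_apply, Real.exp_add, ← Finset.sum_mul]
      ring
    have h2 : ∑ i, (t + fun _ : Fin (n + 1) => c) i = (∑ i, t i) + ((n : ℝ) + 1) * c := by
      simp only [Pi.add_apply, Finset.sum_add_distrib, Finset.sum_const, Finset.card_univ,
        Fintype.card_fin, nsmul_eq_mul]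
      push_cast
      ring
    rw [h1, h2, neg_add, Real.exp_add]
    have h4 : x * (Real.exp (-∑ i, t i) * Real.exp (-(((n : ℝ) + 1) * c)))
        = Real.exp c * Real.exp (-∑ i, t i) := by
      rw [← h3]; ring
    rw [h4]
    ring
  calc Hfun (n + 1) x = ∫ t : Fin (n + 1) → ℝ, gker (n + 1) x (t + fun _ : Fin (n + 1) => c) := by
        unfold Hfun
        exact (integral_add_right_eq_self (μ := volume) (gker (n + 1) x) (fun _ : Fin (n + 1) => c)).symm
    _ = _ := by simp only [key]

/-- For `m ≥ 2` and `x > 0`, `K_m(x)` equals the iterated integral over `ℝ^{m-1}` of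
`exp(-x^{1/m}(e^{t_1} + ⋯ + e^{t_{m-1}} + e^{-(t_1 + ⋯ + t_{m-1})}))`. -/
theorem Kker_eq_integral_exp (m : ℕ) (hm : 2 ≤ m) (x : ℝ) (hx : 0 < x) :
    Kker m x =
      ∫ t : Fin (m - 1) → ℝ,
        Real.exp (-(x ^ ((1 : ℝ) / (m : ℝ))) *
          ((∑ i, Real.exp (t i)) + Real.exp (-∑ i, t i))) := by
  obtain ⟨n, rfl⟩ : ∃ n, m = n + 2 := ⟨m - 2, by omega⟩
  rw [Kker_eq_Hfun n x hx]
  rw [show ((n + 2 : ℕ) : ℝ) = (n : ℝ) + 2 by push_cast; ring]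
  exact Hfun_eq n hx
end

section
/- For every integer m ≥ 1 and every real c > 0, the Mellin transform of K_m satisfies ∫_0^∞ x^{c−1} K_m(x) dx = Γ(c)^m, where Γ is the Gamma function. In particular, for every natural number n, ∫_0^∞ x^n K_m(x) dx = (n!)^m. -/
open MeasureTheory
open scoped ENNReal

lemma Kker_meas : ∀ m, Measurable (Kker m) := by
  intro m
  induction m with
  | zero => simpa [Kker] using measurable_const
  | succ n ih =>
    rcases n with _ | k
    · show Measurable fun x => Real.exp (-x)
      exact (Real.measurable_exp.comp measurable_neg)
    · show Measurable fun x => ∫ t in Set.Ioi (0 : ℝ),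
        Kker (k + 1) (x / t) * Real.exp (-t) / t
      have hjm : Measurable fun p : ℝ × ℝ =>
          Kker (k + 1) (p.1 / p.2) * Real.exp (-p.2) / p.2 :=
        ((ih.comp (measurable_fst.div measurable_snd)).mul
          ((Real.measurable_exp.comp measurable_neg).comp measurable_snd)).div measurable_snd
      exact (hjm.stronglyMeasurable.integral_prod_right').measurable

lemma Kker_nonneg : ∀ m x, 0 ≤ Kker m x := by
  intro m
  induction m with
  | zero => simp [Kker]
  | succ n ih =>
    rcases n with _ | k
    · intro x; exact (Real.exp_pos _).le
    · intro x
      show 0 ≤ ∫ t in Set.Ioi (0 : ℝ), Kker (k + 1) (x / t) * Real.exp (-t) / t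
      refine setIntegral_nonneg measurableSet_Ioi fun t ht => ?_
      exact div_nonneg (mul_nonneg (ih _) (Real.exp_pos _).le) (le_of_lt ht)

lemma lam_base {c : ℝ} (hc : 0 < c) :
    ∫⁻ x in Set.Ioi (0 : ℝ), ENNReal.ofReal (x ^ (c - 1) * Real.exp (-x)) =
      ENNReal.ofReal (Real.Gamma c) := by
  have hint : IntegrableOn (fun x : ℝ => x ^ (c - 1) * Real.exp (-x)) (Set.Ioi 0) :=
    (Real.GammaIntegral_convergent hc).congr_fun (fun x _ => mul_comm _ _) measurableSet_Ioi
  rw [← ofReal_integral_eq_lintegral_ofReal hint ?nn]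
  · congr 1
    rw [Real.Gamma_eq_integral hc]
    exact setIntegral_congr_fun measurableSet_Ioi fun x hx => mul_comm _ _
  case nn =>
    filter_upwards [ae_restrict_mem measurableSet_Ioi] with x hx
    have hx' : (0:ℝ) < x := hx
    positivity

lemma lint_scale (f : ℝ → ℝ≥0∞) (hf : Measurable f) {t : ℝ} (ht : 0 < t) :
    ∫⁻ x in Set.Ioi (0 : ℝ), f (x / t) = ENNReal.ofReal t * ∫⁻ u in Set.Ioi (0 : ℝ), f u := by
  have hne : t⁻¹ ≠ 0 := inv_ne_zero ht.ne'
  have hmap : Measure.map (fun x : ℝ => t⁻¹ * x) volume = ENNReal.ofReal (|t⁻¹⁻¹|) • volume :=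
    Real.map_volume_mul_left hne
  have hpre : (fun x : ℝ => t⁻¹ * x) ⁻¹' Set.Ioi 0 = Set.Ioi 0 := by
    ext x
    simp only [Set.mem_preimage, Set.mem_Ioi]
    constructor
    · intro h; by_contra hx; push_neg at hx
      nlinarith [inv_pos.mpr ht]
    · intro h; positivity
  have hg : Measurable ((Set.Ioi (0:ℝ)).indicator f) :=
    hf.indicator measurableSet_Ioi
  calc ∫⁻ x in Set.Ioi (0 : ℝ), f (x / t)
      = ∫⁻ x, (Set.Ioi (0:ℝ)).indicator f (t⁻¹ * x) := by
        rw [← lintegral_indicator measurableSet_Ioi]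
        congr 1
        ext x
        by_cases hx : x ∈ Set.Ioi (0:ℝ)
        · have hx2 : t⁻¹ * x ∈ Set.Ioi (0:ℝ) := by
            rw [← hpre] at hx; simpa using hx
          simp [Set.indicator_of_mem hx, Set.indicator_of_mem hx2, div_eq_inv_mul]
        · have hx2 : t⁻¹ * x ∉ Set.Ioi (0:ℝ) := by
            rw [← hpre] at hx; simpa using hx
          simp [Set.indicator_of_notMem hx, Set.indicator_of_notMem hx2]
    _ = ∫⁻ y, (Set.Ioi (0:ℝ)).indicator f y ∂(Measure.map (fun x : ℝ => t⁻¹ * x) volume) :=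
        (lintegral_map hg (measurable_const_mul _)).symm
    _ = ENNReal.ofReal t * ∫⁻ u in Set.Ioi (0 : ℝ), f u := by
        rw [hmap, lintegral_smul_measure, lintegral_indicator measurableSet_Ioi,
          inv_inv, abs_of_pos ht, smul_eq_mul]

lemma lam : ∀ m : ℕ, ∀ c : ℝ, 0 < c →
    ∫⁻ x in Set.Ioi (0 : ℝ), ENNReal.ofReal (x ^ (c - 1) * Kker (m + 1) x) =
      ENNReal.ofReal (Real.Gamma c ^ (m + 1)) := by
  intro m
  induction m with
  | zero => intro c hc; simpa [Kker] using lam_base hc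
  | succ k ih =>
    intro c hc
    have hKm : Measurable (Kker (k + 1)) := Kker_meas _
    have hKnn : ∀ x, 0 ≤ Kker (k + 1) x := Kker_nonneg _
    set K : ℝ → ℝ := Kker (k + 1) with hK
    -- the inner kernel as a function of (x, t)
    have hjoint : Measurable fun p : ℝ × ℝ =>
        ENNReal.ofReal (p.1 ^ (c - 1) * (K (p.1 / p.2) * Real.exp (-p.2) / p.2)) := by
      apply ENNReal.measurable_ofReal.comp
      exact ((measurable_fst.pow measurable_const).mul
        (((hKm.comp (measurable_fst.div measurable_snd)).mul
          ((Real.measurable_exp.comp measurable_neg).comp measurable_snd)).div measurable_snd))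
    -- G x = lower integral version of the convolution integral
    set G : ℝ → ℝ≥0∞ := fun x => ∫⁻ t in Set.Ioi (0 : ℝ),
        ENNReal.ofReal (K (x / t) * Real.exp (-t) / t) with hG
    have hGmeas : Measurable G := by
      apply Measurable.lintegral_prod_right
      apply ENNReal.measurable_ofReal.comp
      exact ((hKm.comp (measurable_fst.div measurable_snd)).mul
        ((Real.measurable_exp.comp measurable_neg).comp measurable_snd)).div measurable_snd
    -- Kker (k+2) = toReal of G
    have hKeq : ∀ x : ℝ, Kker (k + 2) x = (G x).toReal := by
      intro x
      have h1 : Kker (k + 2) x = ∫ t in Set.Ioi (0 : ℝ), K (x / t) * Real.exp (-t) / t := rfl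
      rw [h1, hG]
      apply integral_eq_lintegral_of_nonneg_ae
      · filter_upwards [ae_restrict_mem measurableSet_Ioi] with t ht
        exact div_nonneg (mul_nonneg (hKnn _) (Real.exp_pos _).le) (le_of_lt ht)
      · exact (((hKm.comp (measurable_const.div measurable_id)).mul
          (Real.measurable_exp.comp measurable_neg)).div measurable_id).aestronglyMeasurable
    -- splitting the inner integrand
    have hinner : ∀ x : ℝ, 0 ≤ x →
        ∫⁻ t in Set.Ioi (0 : ℝ),
            ENNReal.ofReal (x ^ (c - 1) * (K (x / t) * Real.exp (-t) / t)) =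
          ENNReal.ofReal (x ^ (c - 1)) * G x := by
      intro x hx
      simp_rw [ENNReal.ofReal_mul (Real.rpow_nonneg hx _)]
      rw [lintegral_const_mul' _ _ ENNReal.ofReal_ne_top]
    -- evaluation of the x-integral for fixed t
    have heval : ∀ t ∈ Set.Ioi (0 : ℝ),
        ∫⁻ x in Set.Ioi (0 : ℝ),
            ENNReal.ofReal (x ^ (c - 1) * (K (x / t) * Real.exp (-t) / t)) =
          ENNReal.ofReal (t ^ (c - 1) * Real.exp (-t)) *
            ENNReal.ofReal (Real.Gamma c ^ (k + 1)) := by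
      intro t ht
      have ht' : (0 : ℝ) < t := ht
      have htc : (0 : ℝ) < t ^ (c - 1) := Real.rpow_pos_of_pos ht' _
      have hd : 0 ≤ t ^ (c - 1) * (Real.exp (-t) / t) :=
        mul_nonneg htc.le (div_nonneg (Real.exp_pos _).le ht'.le)
      have step1 : ∫⁻ x in Set.Ioi (0 : ℝ),
          ENNReal.ofReal (x ^ (c - 1) * (K (x / t) * Real.exp (-t) / t)) =
          ∫⁻ x in Set.Ioi (0 : ℝ),
          ENNReal.ofReal ((t ^ (c - 1) * (Real.exp (-t) / t)) *
            ((x / t) ^ (c - 1) * K (x / t))) := by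
        apply setLIntegral_congr_fun measurableSet_Ioi
        intro x hx
        dsimp only
        congr 1
        have hx' : (0 : ℝ) < x := hx
        rw [Real.div_rpow hx'.le ht'.le]
        field_simp
      rw [step1]
      simp_rw [ENNReal.ofReal_mul hd]
      rw [lintegral_const_mul' _ _ ENNReal.ofReal_ne_top]
      have hscale : ∫⁻ x in Set.Ioi (0 : ℝ),
          ENNReal.ofReal ((x / t) ^ (c - 1) * K (x / t)) =
          ENNReal.ofReal t * ∫⁻ u in Set.Ioi (0 : ℝ),
            ENNReal.ofReal (u ^ (c - 1) * K u) := by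
        exact lint_scale (fun u => ENNReal.ofReal (u ^ (c - 1) * K u))
          (ENNReal.measurable_ofReal.comp
            ((measurable_id.pow measurable_const).mul hKm)) ht'
      rw [hscale, ih c hc, ← mul_assoc, ← ENNReal.ofReal_mul hd]
      congr 2
      field_simp
    -- the key double-integral computation
    have key : ∫⁻ x in Set.Ioi (0 : ℝ), ENNReal.ofReal (x ^ (c - 1)) * G x =
        ENNReal.ofReal (Real.Gamma c ^ (k + 1 + 1)) := by
      have e1 : ∫⁻ x in Set.Ioi (0 : ℝ), ENNReal.ofReal (x ^ (c - 1)) * G x =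
          ∫⁻ x in Set.Ioi (0 : ℝ), ∫⁻ t in Set.Ioi (0 : ℝ),
            ENNReal.ofReal (x ^ (c - 1) * (K (x / t) * Real.exp (-t) / t)) := by
        apply setLIntegral_congr_fun measurableSet_Ioi
        intro x hx
        exact (hinner x (le_of_lt hx)).symm
      rw [e1, lintegral_lintegral_swap hjoint.aemeasurable]
      have e2 : ∫⁻ t in Set.Ioi (0 : ℝ), ∫⁻ x in Set.Ioi (0 : ℝ),
          ENNReal.ofReal (x ^ (c - 1) * (K (x / t) * Real.exp (-t) / t)) =
          ∫⁻ t in Set.Ioi (0 : ℝ),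
            ENNReal.ofReal (t ^ (c - 1) * Real.exp (-t)) *
              ENNReal.ofReal (Real.Gamma c ^ (k + 1)) := by
        apply setLIntegral_congr_fun measurableSet_Ioi
        intro t ht
        exact heval t ht
      rw [e2, lintegral_mul_const' _ _ ENNReal.ofReal_ne_top, lam_base hc,
        ← ENNReal.ofReal_mul (Real.Gamma_pos_of_pos hc).le]
      rw [pow_succ]
      ring_nf
    -- a.e. finiteness of G
    have hfin : ∀ᵐ x ∂(volume.restrict (Set.Ioi (0 : ℝ))),
        ENNReal.ofReal (x ^ (c - 1)) * G x < ⊤ := by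
      apply ae_lt_top ((ENNReal.measurable_ofReal.comp
        (measurable_id.pow measurable_const)).mul hGmeas)
      simp only [Function.comp_def, id_eq, Pi.mul_apply]
      rw [key]
      exact ENNReal.ofReal_ne_top
    -- conclude
    have hcongr : ∫⁻ x in Set.Ioi (0 : ℝ),
        ENNReal.ofReal (x ^ (c - 1) * Kker (k + 1 + 1) x) =
        ∫⁻ x in Set.Ioi (0 : ℝ), ENNReal.ofReal (x ^ (c - 1)) * G x := by
      apply lintegral_congr_ae
      filter_upwards [hfin, ae_restrict_mem measurableSet_Ioi] with x hlt hx
      have hx' : (0 : ℝ) < x := hx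
      have hGne : G x ≠ ⊤ := by
        intro h
        rw [h, ENNReal.mul_top (by
          simp only [ne_eq, ENNReal.ofReal_eq_zero, not_le]
          exact Real.rpow_pos_of_pos hx' _)] at hlt
        exact (lt_irrefl _ hlt)
      rw [hKeq x, ENNReal.ofReal_mul (Real.rpow_nonneg hx'.le _),
        ENNReal.ofReal_toReal hGne]
    rw [hcongr, key]

/-- For `m ≥ 1` and `c > 0`, the Mellin transform of `K_m` is `Γ(c)^m`; in particular
`∫_0^∞ x^n K_m(x) dx = (n!)^m` for every natural number `n`. -/
theorem mellin_Kker (m : ℕ) (hm : 1 ≤ m) :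
    (∀ c : ℝ, 0 < c →
      ∫ x in Set.Ioi (0 : ℝ), x ^ (c - 1) * Kker m x = Real.Gamma c ^ m) ∧
    (∀ n : ℕ,
      ∫ x in Set.Ioi (0 : ℝ), x ^ n * Kker m x = (Nat.factorial n : ℝ) ^ m) := by
  obtain ⟨k, rfl⟩ : ∃ k, m = k + 1 := ⟨m - 1, by omega⟩
  have hmain : ∀ c : ℝ, 0 < c →
      ∫ x in Set.Ioi (0 : ℝ), x ^ (c - 1) * Kker (k + 1) x = Real.Gamma c ^ (k + 1) := by
    intro c hc
    rw [integral_eq_lintegral_of_nonneg_ae ?nn ?me, lam k c hc,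
      ENNReal.toReal_ofReal (pow_nonneg (Real.Gamma_pos_of_pos hc).le _)]
    case nn =>
      filter_upwards [ae_restrict_mem measurableSet_Ioi] with x hx
      exact mul_nonneg (Real.rpow_nonneg (le_of_lt hx) _) (Kker_nonneg _ _)
    case me =>
      exact ((measurable_id.pow measurable_const).mul (Kker_meas _)).aestronglyMeasurable
  refine ⟨hmain, fun n => ?_⟩
  have hc : (0 : ℝ) < (n : ℝ) + 1 := by positivity
  have hgam := hmain ((n : ℝ) + 1) hc
  have hcongr : ∫ x in Set.Ioi (0 : ℝ), x ^ n * Kker (k + 1) x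
      = ∫ x in Set.Ioi (0 : ℝ), x ^ ((n : ℝ) + 1 - 1) * Kker (k + 1) x := by
    apply setIntegral_congr_fun measurableSet_Ioi
    intro x hx
    have hx' : (0 : ℝ) < x := hx
    simp only [show (n : ℝ) + 1 - 1 = (n : ℝ) by ring, Real.rpow_natCast]
  rw [hcongr, hgam, Real.Gamma_nat_eq_factorial]
end

section
/- Let 0 < ε < 1 and z, ω ∈ ℂ. Then ∑_{m=1}^∞ ε^m k_m(z,ω) = ε · ∑_{n=0}^∞ z^n conj(ω)^n / (n! − ε), where all the series converge absolutely. -/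
/-- The reproducing kernel `k_m(z,ω) = ∑ₙ zⁿ conj(ω)ⁿ / (n!)^m`. -/
noncomputable def fockKernel (m : ℕ) (z ω : ℂ) : ℂ :=
  ∑' n : ℕ, z ^ n * (starRingEnd ℂ) ω ^ n / (Nat.factorial n : ℂ) ^ m

set_option maxHeartbeats 1000000 in
/-- For `0 < ε < 1` and `z, ω ∈ ℂ`:
`∑_{m=1}^∞ ε^m k_m(z,ω) = ε ∑_{n=0}^∞ zⁿ conj(ω)ⁿ/(n! − ε)`,
all the series converging absolutely. -/
theorem tsum_eps_pow_fockKernel (ε : ℝ) (hε0 : 0 < ε) (hε1 : ε < 1) (z ω : ℂ) :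
    (∀ m : ℕ, 1 ≤ m →
      Summable fun n : ℕ =>
        ‖z ^ n * (starRingEnd ℂ) ω ^ n / (Nat.factorial n : ℂ) ^ m‖) ∧
    (Summable fun m : ℕ => ‖(ε : ℂ) ^ (m + 1) * fockKernel (m + 1) z ω‖) ∧
    (Summable fun n : ℕ =>
      ‖z ^ n * (starRingEnd ℂ) ω ^ n / ((Nat.factorial n : ℂ) - (ε : ℂ))‖) ∧
    ∑' m : ℕ, (ε : ℂ) ^ (m + 1) * fockKernel (m + 1) z ω =
      (ε : ℂ) * ∑' n : ℕ,
        z ^ n * (starRingEnd ℂ) ω ^ n / ((Nat.factorial n : ℂ) - (ε : ℂ)) := by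
  set r : ℝ := ‖z‖ * ‖ω‖ with hrdef
  have hr0 : 0 ≤ r := mul_nonneg (norm_nonneg _) (norm_nonneg _)
  have hfact1 : ∀ n : ℕ, (1 : ℝ) ≤ (n.factorial : ℝ) := fun n => by
    exact_mod_cast Nat.one_le_iff_ne_zero.mpr n.factorial_ne_zero
  have hfactpos : ∀ n : ℕ, (0 : ℝ) < (n.factorial : ℝ) := fun n =>
    lt_of_lt_of_le one_pos (hfact1 n)
  have hnorm : ∀ m n : ℕ,
      ‖z ^ n * (starRingEnd ℂ) ω ^ n / (Nat.factorial n : ℂ) ^ m‖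
        = r ^ n / (n.factorial : ℝ) ^ m := by
    intro m n
    rw [norm_div, norm_mul, norm_pow, norm_pow, norm_pow, RCLike.norm_conj,
      Complex.norm_natCast, mul_pow]
  have hexp : Summable fun n : ℕ => r ^ n / (n.factorial : ℝ) :=
    Real.summable_pow_div_factorial r
  -- first conjunct
  have h1 : ∀ m : ℕ, 1 ≤ m → Summable fun n : ℕ =>
      ‖z ^ n * (starRingEnd ℂ) ω ^ n / (Nat.factorial n : ℂ) ^ m‖ := by
    intro m hm
    simp only [hnorm]
    refine Summable.of_nonneg_of_le (fun n => by positivity) (fun n => ?_) hexp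
    gcongr
    · exact le_self_pow₀ (hfact1 n) (by omega)
  -- sum over n for each m, real version
  have hexp' : ∀ m : ℕ, Summable fun n : ℕ => r ^ n / (n.factorial : ℝ) ^ (m + 1) := by
    intro m
    have := h1 (m + 1) (by omega)
    simpa only [hnorm] using this
  have htsum_le : ∀ m : ℕ,
      (∑' n : ℕ, r ^ n / (n.factorial : ℝ) ^ (m + 1)) ≤ ∑' n : ℕ, r ^ n / (n.factorial : ℝ) := by
    intro m
    refine Summable.tsum_le_tsum (fun n => ?_) (hexp' m) hexp
    gcongr
    · exact le_self_pow₀ (hfact1 n) (by omega)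
  have hE0 : 0 ≤ ∑' n : ℕ, r ^ n / (n.factorial : ℝ) :=
    tsum_nonneg fun n => by positivity
  have hnormε : ‖(ε : ℂ)‖ = ε := by
    rw [Complex.norm_real, Real.norm_eq_abs, abs_of_pos hε0]
  -- second conjunct
  have hk_le : ∀ m : ℕ, ‖fockKernel (m + 1) z ω‖ ≤ ∑' n : ℕ, r ^ n / (n.factorial : ℝ) := by
    intro m
    calc ‖fockKernel (m + 1) z ω‖
        ≤ ∑' n : ℕ, ‖z ^ n * (starRingEnd ℂ) ω ^ n / (Nat.factorial n : ℂ) ^ (m + 1)‖ :=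
          norm_tsum_le_tsum_norm (h1 (m + 1) (by omega))
      _ = ∑' n : ℕ, r ^ n / (n.factorial : ℝ) ^ (m + 1) := by simp only [hnorm]
      _ ≤ _ := htsum_le m
  have h2 : Summable fun m : ℕ => ‖(ε : ℂ) ^ (m + 1) * fockKernel (m + 1) z ω‖ := by
    refine Summable.of_nonneg_of_le (fun m => norm_nonneg _) (fun m => ?_)
      ((((summable_geometric_of_lt_one hε0.le hε1).mul_left ε).mul_right
        (∑' n : ℕ, r ^ n / (n.factorial : ℝ))))
    rw [norm_mul, norm_pow, hnormε, pow_succ' ε m]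
    exact mul_le_mul_of_nonneg_left (hk_le m) (by positivity)
  -- third conjunct
  have hdenpos : ∀ n : ℕ, (0 : ℝ) < (n.factorial : ℝ) - ε := fun n => by
    linarith [hfact1 n]
  have hden : ∀ n : ℕ, ((n.factorial : ℂ) - (ε : ℂ)) = (((n.factorial : ℝ) - ε : ℝ) : ℂ) := by
    intro n; push_cast; ring
  have hnorm3 : ∀ n : ℕ,
      ‖z ^ n * (starRingEnd ℂ) ω ^ n / ((Nat.factorial n : ℂ) - (ε : ℂ))‖
        = r ^ n / ((n.factorial : ℝ) - ε) := by
    intro n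
    rw [hden n, norm_div, norm_mul, norm_pow, norm_pow, RCLike.norm_conj,
      Complex.norm_real, Real.norm_eq_abs, abs_of_pos (hdenpos n), mul_pow]
  have h3 : Summable fun n : ℕ =>
      ‖z ^ n * (starRingEnd ℂ) ω ^ n / ((Nat.factorial n : ℂ) - (ε : ℂ))‖ := by
    simp only [hnorm3]
    refine Summable.of_nonneg_of_le
      (fun n => div_nonneg (pow_nonneg hr0 n) (hdenpos n).le) (fun n => ?_)
      (hexp.mul_left (1 - ε)⁻¹)
    have key : (1 - ε) * (n.factorial : ℝ) ≤ (n.factorial : ℝ) - ε := by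
      nlinarith [hfact1 n]
    calc r ^ n / ((n.factorial : ℝ) - ε)
        ≤ r ^ n / ((1 - ε) * (n.factorial : ℝ)) := by
          have hpos : (0:ℝ) < (1 - ε) * (n.factorial : ℝ) := by nlinarith [hfact1 n]
          exact div_le_div_of_nonneg_left (pow_nonneg hr0 n) hpos key
      _ = (1 - ε)⁻¹ * (r ^ n / (n.factorial : ℝ)) := by
          rw [div_mul_eq_div_div_swap, div_eq_inv_mul]
  -- the double series
  set F : ℕ × ℕ → ℂ := fun p =>
    (ε : ℂ) ^ (p.1 + 1) * (z ^ p.2 * (starRingEnd ℂ) ω ^ p.2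
      / (Nat.factorial p.2 : ℂ) ^ (p.1 + 1)) with hFdef
  have hFnorm : Summable fun p : ℕ × ℕ => ‖F p‖ := by
    rw [summable_prod_of_nonneg (fun p => norm_nonneg _)]
    constructor
    · intro m
      simp only [hFdef, norm_mul]
      exact (h1 (m + 1) (by omega)).mul_left _
    · refine Summable.of_nonneg_of_le
        (fun m => tsum_nonneg fun n => norm_nonneg _) (fun m => ?_)
        (((summable_geometric_of_lt_one hε0.le hε1).mul_left ε).mul_right
          (∑' n : ℕ, r ^ n / (n.factorial : ℝ)))
      have : (∑' n : ℕ, ‖F (m, n)‖)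
          = ε ^ (m + 1) * ∑' n : ℕ, r ^ n / (n.factorial : ℝ) ^ (m + 1) := by
        simp only [hFdef, norm_mul, norm_pow, hnormε, hnorm]
        exact tsum_mul_left
      rw [this, pow_succ' ε m]
      exact mul_le_mul_of_nonneg_left (htsum_le m) (by positivity)
  have hF : Summable F := hFnorm.of_norm
  -- inner geometric sum over m
  have hinner : ∀ n : ℕ,
      (∑' m : ℕ, F (m, n))
        = (ε : ℂ) * (z ^ n * (starRingEnd ℂ) ω ^ n / ((Nat.factorial n : ℂ) - (ε : ℂ))) := by
    intro n
    have hne : (Nat.factorial n : ℂ) ≠ 0 := Nat.cast_ne_zero.mpr n.factorial_ne_zero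
    have hne2 : ((Nat.factorial n : ℂ) - (ε : ℂ)) ≠ 0 := by
      rw [hden n]
      exact Complex.ofReal_ne_zero.mpr (hdenpos n).ne'
    set x : ℂ := (ε : ℂ) / (Nat.factorial n : ℂ) with hxdef
    have hx : ‖x‖ < 1 := by
      rw [hxdef, norm_div, hnormε, Complex.norm_natCast, div_lt_one (hfactpos n)]
      linarith [hfact1 n]
    have step : ∀ m : ℕ, F (m, n)
        = (z ^ n * (starRingEnd ℂ) ω ^ n) * x ^ (m + 1) := by
      intro m
      simp only [hFdef, hxdef, div_pow]
      field_simp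
    calc (∑' m : ℕ, F (m, n))
        = ∑' m : ℕ, (z ^ n * (starRingEnd ℂ) ω ^ n) * x ^ (m + 1) := tsum_congr step
      _ = (z ^ n * (starRingEnd ℂ) ω ^ n) * ∑' m : ℕ, x ^ (m + 1) := tsum_mul_left
      _ = (z ^ n * (starRingEnd ℂ) ω ^ n) * (x * (1 - x)⁻¹) := by
          congr 1
          calc (∑' m : ℕ, x ^ (m + 1)) = ∑' m : ℕ, x * x ^ m := by
                refine tsum_congr fun m => ?_
                rw [pow_succ']
            _ = x * ∑' m : ℕ, x ^ m := tsum_mul_left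
            _ = x * (1 - x)⁻¹ := by rw [tsum_geometric_of_norm_lt_one hx]
      _ = (ε : ℂ) * (z ^ n * (starRingEnd ℂ) ω ^ n / ((Nat.factorial n : ℂ) - (ε : ℂ))) := by
          have h1x : (1 : ℂ) - x = ((Nat.factorial n : ℂ) - (ε : ℂ)) / (Nat.factorial n : ℂ) := by
            rw [hxdef]; field_simp
          rw [hxdef, h1x]
          field_simp
  refine ⟨h1, h2, h3, ?_⟩
  have lhs_eq : (∑' m : ℕ, (ε : ℂ) ^ (m + 1) * fockKernel (m + 1) z ω)
      = ∑' m : ℕ, ∑' n : ℕ, F (m, n) := by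
    refine tsum_congr fun m => ?_
    simp only [fockKernel, hFdef]
    exact (tsum_mul_left).symm
  rw [lhs_eq]
  have hcomm : (∑' m : ℕ, ∑' n : ℕ, F (m, n)) = ∑' n : ℕ, ∑' m : ℕ, F (m, n) :=
    (Summable.tsum_comm (f := fun m n => F (m, n)) hF).symm
  rw [hcomm]
  calc (∑' n : ℕ, ∑' m : ℕ, F (m, n))
      = ∑' n : ℕ, (ε : ℂ) * (z ^ n * (starRingEnd ℂ) ω ^ n
          / ((Nat.factorial n : ℂ) - (ε : ℂ))) := tsum_congr hinner
    _ = _ := tsum_mul_left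
end

section
/- Let 0 < ε < 1 and z, ω ∈ ℂ. Then ∑_{m=1}^∞ (ε^m / m!) k_m(z,ω) = ∑_{n=0}^∞ ( e^{ε/n!} − 1 ) z^n conj(ω)^n, where all the series converge absolutely. -/
lemma exp_sub_one_tsum (x : ℂ) :
    ∑' m : ℕ, x ^ (m + 1) / ((m + 1).factorial : ℂ) = Complex.exp x - 1 := by
  have hs : Summable fun n : ℕ => x ^ n / (n.factorial : ℂ) := NormedSpace.expSeries_div_summable x
  have h0 : Complex.exp x = ∑' n : ℕ, x ^ n / (n.factorial : ℂ) := by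
    rw [Complex.exp_eq_exp_ℂ, NormedSpace.exp_eq_tsum_div]
  rw [h0, Summable.tsum_eq_zero_add hs]
  simp [add_comm]

/-- For `0 < ε < 1` and `z, ω ∈ ℂ`:
`∑_{m=1}^∞ (ε^m/m!) k_m(z,ω) = ∑_{n=0}^∞ (e^{ε/n!} − 1) zⁿ conj(ω)ⁿ`,
all the series converging absolutely. -/
theorem tsum_eps_pow_div_factorial_fockKernel (ε : ℝ) (hε0 : 0 < ε) (hε1 : ε < 1)
    (z ω : ℂ) :
    (∀ m : ℕ, 1 ≤ m →
      Summable fun n : ℕ =>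
        ‖z ^ n * (starRingEnd ℂ) ω ^ n / (Nat.factorial n : ℂ) ^ m‖) ∧
    (Summable fun m : ℕ =>
      ‖(ε : ℂ) ^ (m + 1) / (Nat.factorial (m + 1) : ℂ) * fockKernel (m + 1) z ω‖) ∧
    (Summable fun n : ℕ =>
      ‖(Complex.exp ((ε : ℂ) / (Nat.factorial n : ℂ)) - 1) *
        (z ^ n * (starRingEnd ℂ) ω ^ n)‖) ∧
    ∑' m : ℕ, (ε : ℂ) ^ (m + 1) / (Nat.factorial (m + 1) : ℂ) * fockKernel (m + 1) z ω =
      ∑' n : ℕ, (Complex.exp ((ε : ℂ) / (Nat.factorial n : ℂ)) - 1) *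
        (z ^ n * (starRingEnd ℂ) ω ^ n) := by
  set c : ℕ → ℂ := fun n => z ^ n * (starRingEnd ℂ) ω ^ n with hc
  have hcn : ∀ n, ‖c n‖ = ‖z * (starRingEnd ℂ) ω‖ ^ n := by
    intro n; simp [hc, ← mul_pow]
  -- basic facts
  have hfac1 : ∀ n : ℕ, (1 : ℝ) ≤ (n.factorial : ℝ) := fun n => by
    exact_mod_cast n.factorial_pos
  have hfacpow : ∀ (n m : ℕ), 1 ≤ m → (n.factorial : ℝ) ≤ (n.factorial : ℝ) ^ m := by
    intro n m hm
    calc (n.factorial : ℝ) = (n.factorial : ℝ) ^ 1 := (pow_one _).symm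
    _ ≤ (n.factorial : ℝ) ^ m := pow_le_pow_right₀ (hfac1 n) hm
  have hsum2 : Summable fun n : ℕ => ‖z * (starRingEnd ℂ) ω‖ ^ n / n.factorial :=
    Real.summable_pow_div_factorial _
  -- part 1
  have part1 : ∀ m : ℕ, 1 ≤ m →
      Summable fun n : ℕ => ‖c n / (n.factorial : ℂ) ^ m‖ := by
    intro m hm
    refine hsum2.of_nonneg_of_le (fun n => norm_nonneg _) fun n => ?_
    rw [norm_div, norm_pow, Complex.norm_natCast, hcn]
    exact div_le_div_of_nonneg_left (by positivity) (by positivity) (hfacpow n m hm)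
  -- double series
  set F : ℕ × ℕ → ℂ := fun p =>
    (ε : ℂ) ^ (p.1 + 1) / ((p.1 + 1).factorial : ℂ) * (c p.2 / (p.2.factorial : ℂ) ^ (p.1 + 1))
    with hF
  have hnormF : ∀ p : ℕ × ℕ, ‖F p‖ =
      ε ^ (p.1 + 1) / ((p.1 + 1).factorial : ℝ) *
        (‖z * (starRingEnd ℂ) ω‖ ^ p.2 / (p.2.factorial : ℝ) ^ (p.1 + 1)) := by
    intro p
    rw [hF]
    simp [norm_div, norm_pow, Complex.norm_natCast, hcn, abs_of_pos hε0]
  have hsum1 : Summable fun m : ℕ => ε ^ (m + 1) / ((m + 1).factorial : ℝ) :=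
    (summable_nat_add_iff 1).2 (Real.summable_pow_div_factorial ε)
  have hFnorm : Summable fun p : ℕ × ℕ => ‖F p‖ := by
    have hG := hsum1.mul_of_nonneg hsum2 (fun m => by positivity) (fun n => by positivity)
    refine hG.of_nonneg_of_le (fun p => norm_nonneg _) fun p => ?_
    rw [hnormF]
    refine mul_le_mul_of_nonneg_left ?_ (by positivity)
    exact div_le_div_of_nonneg_left (by positivity) (by positivity)
      (hfacpow p.2 (p.1 + 1) (Nat.le_add_left 1 p.1))
  have hFsum : Summable F := hFnorm.of_norm
  -- fiberwise norm sums
  have hfib := (summable_prod_of_nonneg (fun p => norm_nonneg (F p))).1 hFnorm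
  have hfib' := (summable_prod_of_nonneg
      (fun p : ℕ × ℕ => norm_nonneg (F p.swap))).1 hFnorm.prod_symm
  -- row sums equal the fockKernel terms
  have hrow : ∀ m : ℕ, (ε : ℂ) ^ (m + 1) / ((m + 1).factorial : ℂ) * fockKernel (m + 1) z ω
      = ∑' n : ℕ, F (m, n) := by
    intro m
    rw [fockKernel, ← tsum_mul_left]
  -- column sums
  have hcol : ∀ n : ℕ, (∑' m : ℕ, F (m, n)) =
      (Complex.exp ((ε : ℂ) / (n.factorial : ℂ)) - 1) * c n := by
    intro n
    have : ∀ m : ℕ, F (m, n) =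
        c n * (((ε : ℂ) / (n.factorial : ℂ)) ^ (m + 1) / ((m + 1).factorial : ℂ)) := by
      intro m
      rw [hF]
      field_simp
      ring
    rw [tsum_congr this, tsum_mul_left, exp_sub_one_tsum, mul_comm]
  refine ⟨part1, ?_, ?_, ?_⟩
  · refine hfib.2.of_nonneg_of_le (fun m => norm_nonneg _) fun m => ?_
    rw [hrow m]
    exact norm_tsum_le_tsum_norm (hfib.1 m)
  · refine hfib'.2.of_nonneg_of_le (fun n => norm_nonneg _) fun n => ?_
    rw [← hcol n]
    exact norm_tsum_le_tsum_norm (hfib'.1 n)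
  · calc ∑' m : ℕ, (ε : ℂ) ^ (m + 1) / ((m + 1).factorial : ℂ) * fockKernel (m + 1) z ω
        = ∑' (m : ℕ) (n : ℕ), F (m, n) := tsum_congr hrow
    _ = ∑' (n : ℕ) (m : ℕ), F (m, n) := (Summable.tsum_comm (f := fun m n : ℕ => F (m, n)) hFsum).symm
    _ = _ := tsum_congr hcol
end

section
/- Let m ≥ 1 be an integer. (i) If (g_n) and (h_n) are sequences with ∑_n |g_n|² (n!)^m < ∞ and ∑_n |h_n|² (n!)^m < ∞ such that for every natural number n one has conj(g_{n+1}) ((n+1)!)^m = conj(h_n) (n!)^m (i.e., ⟨z^{n+1}, g⟩_{F_m} = ⟨z^n, h⟩_{F_m} for all n), then h_n = (n+1)^m g_{n+1} for all n, and ∑_{n=1}^∞ |g_n|² (n!)^m n^m < ∞. (ii) Conversely, if (g_n) satisfies ∑_{n=1}^∞ |g_n|² (n!)^m n^m < ∞ and h_n := (n+1)^m g_{n+1}, then ∑_n |h_n|² (n!)^m < ∞ and for every sequence (f_n) with ∑_n |f_n|² (n!)^m n^m < ∞ the series ∑_{n=0}^∞ f_n conj(g_{n+1}) ((n+1)!)^m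 and ∑_{n=0}^∞ f_n conj(h_n) (n!)^m converge absolutely and are equal. (This states that in F_m the adjoint of multiplication by z is the operator (∂∘M_z)^{m−1}∘∂, which sends g(z)=∑ g_n z^n to ∑_n (n+1)^m g_{n+1} z^n, with domain D = { f : ∑_n |f_n|²(n!)^m n^m < ∞ }.) -/
private lemma amgm' {x a b : ℝ} (hx : 0 ≤ x) (ha : 0 ≤ a) (hb : 0 ≤ b)
    (h : x ^ 2 ≤ a * b) : x ≤ (a + b) / 2 := by
  nlinarith [sq_nonneg (a - b), sq_nonneg (a + b - 2 * x)]

private lemma factpow (m k : ℕ) :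
    ((Nat.factorial (k + 1) : ℝ)) ^ m = ((k : ℝ) + 1) ^ m * (Nat.factorial k : ℝ) ^ m := by
  rw [← mul_pow]; congr 1; push_cast [Nat.factorial_succ]; ring

private lemma factpowC (m k : ℕ) :
    (((Nat.factorial (k + 1) : ℝ)) : ℂ) ^ m = ((k : ℂ) + 1) ^ m * (((Nat.factorial k : ℝ)) : ℂ) ^ m := by
  rw [← mul_pow]; congr 1; push_cast [Nat.factorial_succ]; ring

private lemma abs_succ (k : ℕ) : ‖(k : ℂ) + 1‖ = (k : ℝ) + 1 := by
  rw [show ((k : ℂ) + 1) = ((k + 1 : ℕ) : ℂ) by push_cast; ring, Complex.norm_natCast]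
  push_cast; ring

private lemma key_summable (m : ℕ) (hm : 1 ≤ m) (f g : ℕ → ℂ)
    (hf : Summable fun n : ℕ => ‖f n‖ ^ 2 * (Nat.factorial n : ℝ) ^ m * (n : ℝ) ^ m)
    (hg : Summable fun n : ℕ => ‖g n‖ ^ 2 * (Nat.factorial n : ℝ) ^ m * (n : ℝ) ^ m) :
    Summable fun n : ℕ =>
      ‖f n‖ * ‖g (n + 1)‖ * (Nat.factorial (n + 1) : ℝ) ^ m := by
  set A : ℕ → ℝ := fun n => ‖f n‖ ^ 2 * (Nat.factorial n : ℝ) ^ m * (n : ℝ) ^ m with hA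
  set B : ℕ → ℝ := fun n => ‖g n‖ ^ 2 * (Nat.factorial n : ℝ) ^ m * (n : ℝ) ^ m with hB
  have hA1 : Summable fun n : ℕ => A (n + 1) := (summable_nat_add_iff 1).mpr hf
  have hB2 : Summable fun n : ℕ => B (n + 2) := (summable_nat_add_iff 2).mpr hg
  apply (summable_nat_add_iff 1).mp
  apply Summable.of_nonneg_of_le (f := fun n => (A (n + 1) + B (n + 2)) / 2)
    (fun n => by positivity) (fun n => ?_) ((hA1.add hB2).div_const 2)
  apply amgm' (by positivity) (by simp only [hA]; positivity) (by simp only [hB]; positivity)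
  have h1 : (1 : ℝ) ≤ ((n : ℝ) + 1) ^ m := one_le_pow₀ (by exact le_add_of_nonneg_left (Nat.cast_nonneg n))
  have heq : A (n + 1) * B (n + 2) =
      (‖f (n + 1)‖ * ‖g (n + 1 + 1)‖ *
        (Nat.factorial (n + 1 + 1) : ℝ) ^ m) ^ 2 * ((n : ℝ) + 1) ^ m := by
    simp only [hA, hB]
    rw [factpow m (n + 1), factpow m n]
    push_cast
    ring
  rw [heq]
  nlinarith [sq_nonneg (‖f (n + 1)‖ * ‖g (n + 1 + 1)‖ *
    (Nat.factorial (n + 1 + 1) : ℝ) ^ m)]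

/-- In `F_m` the adjoint of multiplication by `z` is `(∂∘M_z)^{m-1}∘∂`,
which sends `g(z) = ∑ gₙ zⁿ` to `∑ (n+1)^m g_{n+1} zⁿ`, with domain
`D = {f : ∑ |fₙ|²(n!)^m n^m < ∞}`.
(i) If `g, h ∈ F_m` and `⟨z^{n+1}, g⟩ = ⟨zⁿ, h⟩` for all `n`, then
`hₙ = (n+1)^m g_{n+1}` and `∑ |gₙ|²(n!)^m n^m < ∞`.
(ii) Conversely, if `∑ |gₙ|²(n!)^m n^m < ∞` and `hₙ := (n+1)^m g_{n+1}`, then `h ∈ F_m`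
and for every `f ∈ D` the series `∑ fₙ conj(g_{n+1})((n+1)!)^m` and `∑ fₙ conj(hₙ)(n!)^m`
converge absolutely and are equal. -/
theorem adjoint_of_mul_z_Fock (m : ℕ) (hm : 1 ≤ m) :
    (∀ g h : ℕ → ℂ,
      (Summable fun n : ℕ => ‖g n‖ ^ 2 * (Nat.factorial n : ℝ) ^ m) →
      (Summable fun n : ℕ => ‖h n‖ ^ 2 * (Nat.factorial n : ℝ) ^ m) →
      (∀ n : ℕ,
        (starRingEnd ℂ) (g (n + 1)) * ((Nat.factorial (n + 1) : ℝ) : ℂ) ^ m =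
          (starRingEnd ℂ) (h n) * ((Nat.factorial n : ℝ) : ℂ) ^ m) →
      ((∀ n : ℕ, h n = ((n : ℂ) + 1) ^ m * g (n + 1)) ∧
        Summable fun n : ℕ =>
          ‖g n‖ ^ 2 * (Nat.factorial n : ℝ) ^ m * (n : ℝ) ^ m)) ∧
    (∀ g : ℕ → ℂ,
      (Summable fun n : ℕ =>
        ‖g n‖ ^ 2 * (Nat.factorial n : ℝ) ^ m * (n : ℝ) ^ m) →
      ((Summable fun n : ℕ =>
          ‖((n : ℂ) + 1) ^ m * g (n + 1)‖ ^ 2 * (Nat.factorial n : ℝ) ^ m) ∧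
        ∀ f : ℕ → ℂ,
          (Summable fun n : ℕ =>
            ‖f n‖ ^ 2 * (Nat.factorial n : ℝ) ^ m * (n : ℝ) ^ m) →
          (Summable fun n : ℕ =>
            ‖f n * (starRingEnd ℂ) (g (n + 1)) * ((Nat.factorial (n + 1) : ℝ) : ℂ) ^ m‖) ∧
          (Summable fun n : ℕ =>
            ‖f n * (starRingEnd ℂ) (((n : ℂ) + 1) ^ m * g (n + 1)) *
              ((Nat.factorial n : ℝ) : ℂ) ^ m‖) ∧
          ∑' n : ℕ,
              f n * (starRingEnd ℂ) (g (n + 1)) * ((Nat.factorial (n + 1) : ℝ) : ℂ) ^ m =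
            ∑' n : ℕ,
              f n * (starRingEnd ℂ) (((n : ℂ) + 1) ^ m * g (n + 1)) *
                ((Nat.factorial n : ℝ) : ℂ) ^ m)) := by
  constructor
  · intro g h hg hh hrel
    have hid : ∀ n : ℕ, h n = ((n : ℂ) + 1) ^ m * g (n + 1) := by
      intro n
      have h0 : ((Nat.factorial n : ℝ) : ℂ) ^ m ≠ 0 := by
        apply pow_ne_zero
        exact_mod_cast Nat.cast_ne_zero.mpr (Nat.factorial_ne_zero n)
      have h1 := hrel n
      rw [factpowC m n] at h1
      have h3 : (starRingEnd ℂ) (h n) = ((n : ℂ) + 1) ^ m * (starRingEnd ℂ) (g (n + 1)) :=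
        mul_right_cancel₀ h0 (by linear_combination -h1)
      have h4 := congrArg (starRingEnd ℂ) h3
      simpa [map_mul, map_pow] using h4
    refine ⟨hid, ?_⟩
    apply (summable_nat_add_iff 1).mp
    refine hh.congr fun k => ?_
    rw [hid k, norm_mul, norm_pow, abs_succ k, factpow m k]
    push_cast
    ring
  · intro g hg
    have hgsq : Summable fun n : ℕ =>
        ‖((n : ℂ) + 1) ^ m * g (n + 1)‖ ^ 2 * (Nat.factorial n : ℝ) ^ m := by
      refine ((summable_nat_add_iff 1).mpr hg).congr fun n => ?_
      rw [norm_mul, norm_pow, abs_succ n, factpow m n]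
      push_cast
      ring
    refine ⟨hgsq, ?_⟩
    intro f hf
    have S1 := key_summable m hm f g hf hg
    have e1 : ∀ n : ℕ,
        ‖f n * (starRingEnd ℂ) (g (n + 1)) * ((Nat.factorial (n + 1) : ℝ) : ℂ) ^ m‖ =
          ‖f n‖ * ‖g (n + 1)‖ * (Nat.factorial (n + 1) : ℝ) ^ m := by
      intro n
      simp [map_mul, map_pow, Complex.norm_conj, Complex.norm_real,
        abs_of_nonneg (Nat.cast_nonneg (Nat.factorial (n + 1)) : (0:ℝ) ≤ _)]
    have e2 : ∀ n : ℕ,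
        ‖f n * (starRingEnd ℂ) (((n : ℂ) + 1) ^ m * g (n + 1)) *
            ((Nat.factorial n : ℝ) : ℂ) ^ m‖ =
          ‖f n‖ * ‖g (n + 1)‖ * (Nat.factorial (n + 1) : ℝ) ^ m := by
      intro n
      rw [factpow m n]
      simp [map_mul, map_pow, Complex.norm_conj, Complex.norm_real,
        abs_of_nonneg (Nat.cast_nonneg (Nat.factorial n) : (0:ℝ) ≤ _), abs_succ n]
      ring
    refine ⟨S1.congr fun n => (e1 n).symm, S1.congr fun n => (e2 n).symm, ?_⟩
    refine tsum_congr fun n => ?_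
    rw [factpowC m n, map_mul, map_pow]
    have : (starRingEnd ℂ) ((n : ℂ) + 1) = (n : ℂ) + 1 := by simp
    rw [this]
    ring
end

section
/- Let m ≥ 1 be an integer and let ⟨·,·⟩ be an inner product (a positive-definite Hermitian sesquilinear form) on the complex vector space of polynomials ℂ[X]. Suppose that for all natural numbers l ≥ 0 and k ≥ 1 one has ⟨X^{l+1}, X^k⟩ = k^m ⟨X^l, X^{k−1}⟩, and ⟨X^{l+1}, 1⟩ = 0 for all l ≥ 0. Then the monomials are pairwise orthogonal, i.e., ⟨X^k, X^l⟩ = 0 whenever k ≠ l, and ⟨X^k, X^k⟩ = (k!)^m ⟨1, 1⟩ for every k ≥ 0. Consequently, the inner product is a positive multiple of the F_m inner product on polynomials: for polynomials f = ∑ f_k X^k and g = ∑ g_k X^k, ⟨f, g⟩ = ⟨1,1⟩ · ∑_k f_k conj(g_k) (k!)^m. -/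
open Polynomial

/-- Uniqueness: if an inner product (positive-definite Hermitian sesquilinear form,
linear in the first argument) on `ℂ[X]` satisfies `⟨X^{l+1}, 1⟩ = 0` and
`⟨X^{l+1}, X^{k+1}⟩ = (k+1)^m ⟨X^l, X^k⟩`, then the monomials are pairwise orthogonal,
`⟨X^k, X^k⟩ = (k!)^m ⟨1,1⟩`, and `⟨f,g⟩ = ⟨1,1⟩ ∑ₖ fₖ conj(gₖ) (k!)^m`:
the inner product is a positive multiple of the `F_m` inner product. -/
theorem inner_product_eq_Fock_inner (m : ℕ) (hm : 1 ≤ m)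
    (B : Polynomial ℂ → Polynomial ℂ → ℂ)
    (hadd : ∀ f g h : Polynomial ℂ, B (f + g) h = B f h + B g h)
    (hsmul : ∀ (c : ℂ) (f g : Polynomial ℂ), B (c • f) g = c * B f g)
    (hherm : ∀ f g : Polynomial ℂ, B g f = (starRingEnd ℂ) (B f g))
    (hpos : ∀ f : Polynomial ℂ, 0 ≤ (B f f).re)
    (hdef : ∀ f : Polynomial ℂ, B f f = 0 → f = 0)
    (h1 : ∀ l : ℕ, B (X ^ (l + 1)) 1 = 0)
    (hrec : ∀ l k : ℕ,
      B (X ^ (l + 1)) (X ^ (k + 1)) = ((k : ℂ) + 1) ^ m * B (X ^ l) (X ^ k)) :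
    (∀ k l : ℕ, k ≠ l → B (X ^ k) (X ^ l) = 0) ∧
    (∀ k : ℕ, B (X ^ k) (X ^ k) = ((Nat.factorial k : ℝ) : ℂ) ^ m * B 1 1) ∧
    (∀ f g : Polynomial ℂ,
      B f g =
        B 1 1 *
          ∑' k : ℕ,
            f.coeff k * (starRingEnd ℂ) (g.coeff k) * ((Nat.factorial k : ℝ) : ℂ) ^ m) := by
  -- auxiliary: B 0 g = 0
  have hzero : ∀ g, B 0 g = 0 := by
    intro g
    have := hsmul 0 0 g
    simpa using this
  have hzero' : ∀ f, B f 0 = 0 := by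
    intro f
    rw [hherm, hzero]; simp
  have hadd' : ∀ f g h : Polynomial ℂ, B f (g + h) = B f g + B f h := by
    intro f g h
    rw [hherm, hadd, map_add, ← hherm, ← hherm]
  have hsmul' : ∀ (c : ℂ) (f g : Polynomial ℂ), B f (c • g) = (starRingEnd ℂ) c * B f g := by
    intro c f g
    rw [hherm, hsmul, map_mul, ← hherm]
  -- orthogonality above the diagonal
  have horth : ∀ k l : ℕ, B (X ^ (k + l + 1)) (X ^ k) = 0 := by
    intro k
    induction k with
    | zero => intro l; simpa using h1 l
    | succ k ih =>
      intro l
      have : k + 1 + l + 1 = (k + l + 1) + 1 := by ring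
      rw [this, hrec (k + l + 1) k, ih l, mul_zero]
  have orth : ∀ k l : ℕ, k ≠ l → B (X ^ k) (X ^ l) = 0 := by
    intro k l hkl
    rcases lt_or_gt_of_ne hkl with h | h
    · -- k < l
      have : l = k + (l - k - 1) + 1 := by omega
      rw [hherm, this, horth, map_zero]
    · have : k = l + (k - l - 1) + 1 := by omega
      rw [this, horth]
  -- diagonal
  have diag : ∀ k : ℕ, B (X ^ k) (X ^ k) = ((Nat.factorial k : ℝ) : ℂ) ^ m * B 1 1 := by
    intro k
    induction k with
    | zero => simp
    | succ k ih =>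
      rw [hrec k k, ih]
      have : ((Nat.factorial (k+1) : ℝ) : ℂ) = ((k : ℂ) + 1) * ((Nat.factorial k : ℝ) : ℂ) := by
        push_cast [Nat.factorial_succ]; ring
      rw [this, mul_pow]; ring
  refine ⟨orth, diag, ?_⟩
  intro f g
  -- finite sums linearity
  have hsum : ∀ (s : Finset ℕ) (F : ℕ → Polynomial ℂ) (g : Polynomial ℂ),
      B (∑ i ∈ s, F i) g = ∑ i ∈ s, B (F i) g := by
    intro s F g
    induction s using Finset.induction_on with
    | empty => simpa using hzero g
    | insert a s' h ih => rw [Finset.sum_insert h, hadd, ih, Finset.sum_insert h]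
  have hsum' : ∀ (s : Finset ℕ) (F : ℕ → Polynomial ℂ) (f : Polynomial ℂ),
      B f (∑ i ∈ s, F i) = ∑ i ∈ s, B f (F i) := by
    intro s F f
    rw [hherm, hsum]
    simp only [map_sum]
    congr 1; ext i; rw [← hherm]
  set n := max f.natDegree g.natDegree + 1 with hn
  have hf : f = ∑ i ∈ Finset.range n, (f.coeff i) • X ^ i := by
    conv_lhs => rw [f.as_sum_range' n (by omega)]
    refine Finset.sum_congr rfl fun i _ => ?_
    rw [Polynomial.smul_eq_C_mul, ← Polynomial.C_mul_X_pow_eq_monomial]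
  have hg : g = ∑ i ∈ Finset.range n, (g.coeff i) • X ^ i := by
    conv_lhs => rw [g.as_sum_range' n (by omega)]
    refine Finset.sum_congr rfl fun i _ => ?_
    rw [Polynomial.smul_eq_C_mul, ← Polynomial.C_mul_X_pow_eq_monomial]
  have key : B f g = ∑ i ∈ Finset.range n,
      f.coeff i * (starRingEnd ℂ) (g.coeff i) * ((Nat.factorial i : ℝ) : ℂ) ^ m * B 1 1 := by
    conv_lhs => rw [hf, hg]
    rw [hsum]
    refine Finset.sum_congr rfl fun i hi => ?_
    rw [hsmul, hsum']
    rw [Finset.mul_sum]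
    rw [Finset.sum_eq_single i]
    · rw [hsmul', diag]; ring
    · intro j _ hj
      rw [hsmul', orth i j (Ne.symm hj), mul_zero, mul_zero]
    · intro h; exact absurd hi h
  rw [key]
  have htsum : ∑' k : ℕ, f.coeff k * (starRingEnd ℂ) (g.coeff k) * ((Nat.factorial k : ℝ) : ℂ) ^ m
      = ∑ k ∈ Finset.range n, f.coeff k * (starRingEnd ℂ) (g.coeff k) * ((Nat.factorial k : ℝ) : ℂ) ^ m := by
    refine tsum_eq_sum ?_
    intro k hk
    simp only [Finset.mem_range, not_lt] at hk
    have : f.coeff k = 0 := f.coeff_eq_zero_of_natDegree_lt (by omega)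
    rw [this, zero_mul, zero_mul]
  rw [htsum, Finset.mul_sum]
  refine Finset.sum_congr rfl fun i _ => ?_
  ring
end

section
/- Let m ≥ 1 be an integer and let S : ℕ × ℕ → ℕ satisfy the recurrence S(k,n) = n·S(k−1,n) + S(k−1,n−1) for k,n ≥ 1, with S(k,0) = 1 if k = 0 and 0 otherwise, and S(k,n) = 0 whenever k < n (so S are the Stirling numbers of the second kind). Let 𝔞 be the operator of multiplication by X and 𝔟 the operator of differentiation on ℂ[X], and set 𝔞* := 𝔟 ∘ ( ∑_{n=1}^{m−1} S(m−1,n) 𝔞^n 𝔟^n ) for m ≥ 2 and 𝔞* := 𝔟 for m = 1. Then for every polynomial p, (𝔞*𝔞 − 𝔞𝔞*)(p) = p + ∑_{n=1}^{m−1} (n+1) S(m, n+1) (𝔞^n 𝔟^n)(p). -/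
open Polynomial

/-- Multiplication by `X` on `ℂ[X]`, as a linear endomorphism (the creation operator `𝔞`). -/
noncomputable def aOp : Module.End ℂ (Polynomial ℂ) := LinearMap.mulLeft ℂ (X : Polynomial ℂ)

/-- Differentiation on `ℂ[X]`, as a linear endomorphism (the annihilation operator `𝔟`). -/
noncomputable def bOp : Module.End ℂ (Polynomial ℂ) := Polynomial.derivative

lemma comm_ba : bOp * aOp = aOp * bOp + (1 : Module.End ℂ (Polynomial ℂ)) := by
  refine LinearMap.ext fun p => ?_
  simp [bOp, aOp, Module.End.mul_apply, derivative_mul]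
  ring

lemma comm_b_apow (n : ℕ) :
    bOp * aOp ^ (n + 1) = aOp ^ (n + 1) * bOp + ((n + 1 : ℕ) : ℂ) • aOp ^ n := by
  induction n with
  | zero => simpa using comm_ba
  | succ n ih =>
    have h : bOp * aOp ^ (n + 2) = (bOp * aOp ^ (n + 1)) * aOp := by
      rw [mul_assoc, ← pow_succ]
    rw [h, ih, add_mul, smul_mul_assoc, mul_assoc, comm_ba, ← pow_succ]
    rw [mul_add, mul_one]
    simp only [pow_succ, mul_assoc, Nat.cast_add, Nat.cast_one]
    module

lemma comm_bpow_a (n : ℕ) :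
    bOp ^ (n + 1) * aOp = aOp * bOp ^ (n + 1) + ((n + 1 : ℕ) : ℂ) • bOp ^ n := by
  induction n with
  | zero => simpa using comm_ba
  | succ n ih =>
    have h : bOp ^ (n + 2) * aOp = bOp * (bOp ^ (n + 1) * aOp) := by
      rw [← mul_assoc, ← pow_succ']
    rw [h, ih, mul_add, ← mul_assoc, comm_ba, mul_smul_comm, ← pow_succ']
    rw [add_mul, one_mul]
    simp only [pow_succ', mul_assoc, Nat.cast_add, Nat.cast_one]
    module

lemma comm_b_apow_mul (n : ℕ) (x : Module.End ℂ (Polynomial ℂ)) :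
    bOp * (aOp ^ (n + 1) * x)
      = aOp ^ (n + 1) * (bOp * x) + ((n + 1 : ℕ) : ℂ) • (aOp ^ n * x) := by
  rw [← mul_assoc, comm_b_apow, add_mul, smul_mul_assoc, mul_assoc]

lemma key (j : ℕ) :
    (bOp * (aOp ^ (j+1) * bOp ^ (j+1))) * aOp - aOp * (bOp * (aOp ^ (j+1) * bOp ^ (j+1)))
      = ((j + 2 : ℕ) : ℂ) • (aOp ^ (j+1) * bOp ^ (j+1))
        + (((j + 1 : ℕ) : ℂ) * ((j + 1 : ℕ) : ℂ)) • (aOp ^ j * bOp ^ j) := by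
  simp only [mul_assoc]
  rw [comm_bpow_a j]
  simp only [mul_add, mul_smul_comm]
  rw [show aOp ^ (j+1) * (aOp * bOp ^ (j+1)) = aOp ^ (j+2) * bOp ^ (j+1) by
    rw [← mul_assoc, ← pow_succ]]
  rw [show (j + 2) = (j + 1) + 1 from rfl, comm_b_apow_mul (j+1) (bOp ^ (j+1)),
    comm_b_apow_mul j (bOp ^ j), comm_b_apow_mul j (bOp ^ (j+1))]
  have ha : aOp * aOp ^ j = aOp ^ j * aOp := (pow_succ' aOp j).symm.trans (pow_succ aOp j)
  have hb : bOp * bOp ^ j = bOp ^ j * bOp := (pow_succ' bOp j).symm.trans (pow_succ bOp j)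
  simp only [mul_add, mul_smul_comm, smul_add, smul_smul, pow_succ, pow_succ',
    mul_assoc, Nat.cast_add, Nat.cast_one, Nat.cast_ofNat]
  simp only [← mul_assoc]
  simp only [ha, hb]
  simp only [mul_assoc]
  simp only [ha, hb]
  module

lemma S_one (S : ℕ → ℕ → ℕ)
    (hS0 : ∀ k : ℕ, S k 0 = if k = 0 then 1 else 0)
    (hSrec : ∀ k n : ℕ, 1 ≤ k → 1 ≤ n → S k n = n * S (k - 1) n + S (k - 1) (n - 1))
    (hSlt : ∀ k n : ℕ, k < n → S k n = 0) :
    ∀ k : ℕ, 1 ≤ k → S k 1 = 1 := by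
  intro k hk
  induction k with
  | zero => omega
  | succ k ih =>
    rcases Nat.eq_or_lt_of_le hk with h | h
    · have h0 : k = 0 := by omega
      subst h0
      have := hSrec 1 1 le_rfl le_rfl
      simp [hSlt 0 1 (by omega), hS0 0] at this
      exact this
    · have hk1 : 1 ≤ k := by omega
      have h' := hSrec (k + 1) 1 (by omega) le_rfl
      simp only [Nat.add_sub_cancel, one_mul, Nat.sub_self] at h'
      rw [h', ih hk1, hS0 k, if_neg (by omega)]


/-- Let `S` be the Stirling numbers of the second kind and set
`𝔞* = (𝔟𝔞)^{m-1}𝔟 = 𝔟 ∘ ∑_{n=1}^{m-1} S(m-1,n) 𝔞ⁿ𝔟ⁿ` (with `𝔞* = 𝔟` for `m = 1`).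
Then the commutator satisfies
`[𝔞*, 𝔞] = I + ∑_{n=1}^{m-1} (n+1) S(m, n+1) 𝔞ⁿ𝔟ⁿ` on every polynomial. -/
theorem commutator_adjoint_creation (m : ℕ) (hm : 1 ≤ m) (S : ℕ → ℕ → ℕ)
    (hS0 : ∀ k : ℕ, S k 0 = if k = 0 then 1 else 0)
    (hSrec : ∀ k n : ℕ, 1 ≤ k → 1 ≤ n → S k n = n * S (k - 1) n + S (k - 1) (n - 1))
    (hSlt : ∀ k n : ℕ, k < n → S k n = 0)
    (astar : Module.End ℂ (Polynomial ℂ))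
    (hastar : astar =
      if m = 1 then bOp
      else bOp * ∑ n ∈ Finset.Icc 1 (m - 1), (S (m - 1) n : ℂ) • (aOp ^ n * bOp ^ n)) :
    ∀ p : Polynomial ℂ,
      (astar * aOp - aOp * astar) p =
        p + ∑ n ∈ Finset.Icc 1 (m - 1),
          ((n + 1 : ℕ) * S m (n + 1) : ℂ) • ((aOp ^ n * bOp ^ n) p) := by
  have main : astar * aOp - aOp * astar
      = 1 + ∑ n ∈ Finset.Icc 1 (m - 1),
          (((n + 1) * S m (n + 1) : ℕ) : ℂ) • (aOp ^ n * bOp ^ n) := by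
    by_cases h1 : m = 1
    · subst h1
      rw [hastar, if_pos rfl]
      simp [comm_ba]
    · obtain ⟨k, rfl⟩ : ∃ k, m = k + 2 := ⟨m - 2, by omega⟩
      rw [hastar, if_neg h1]
      simp only [show k + 2 - 1 = k + 1 from rfl]
      have hIcc : Finset.Icc 1 (k + 1) = Finset.Ico 1 (k + 2) := by
        rw [← Finset.Ico_add_one_right_eq_Icc]
        rfl
      rw [hIcc]
      simp only [Finset.sum_Ico_eq_sum_range]
      simp only [show k + 2 - 1 = k + 1 from rfl, Nat.add_comm 1]
      -- distribute products over the sum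
      rw [Finset.mul_sum]
      simp only [mul_smul_comm]
      rw [Finset.sum_mul, Finset.mul_sum]
      simp only [smul_mul_assoc, mul_smul_comm]
      rw [← Finset.sum_sub_distrib]
      -- per-term commutator computation
      have hterm : ∀ i ∈ Finset.range (k + 1),
          ((S (k + 1) (i + 1) : ℂ) • ((bOp * (aOp ^ (i + 1) * bOp ^ (i + 1))) * aOp)
              - (S (k + 1) (i + 1) : ℂ) • (aOp * (bOp * (aOp ^ (i + 1) * bOp ^ (i + 1)))))
          = ((S (k + 1) (i + 1) : ℂ) * ((i + 2 : ℕ) : ℂ)) • (aOp ^ (i + 1) * bOp ^ (i + 1))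
            + ((S (k + 1) (i + 1) : ℂ) * (((i + 1 : ℕ) : ℂ) * ((i + 1 : ℕ) : ℂ)))
              • (aOp ^ i * bOp ^ i) := by
        intro i _
        have h := congrArg (fun x => ((S (k + 1) (i + 1) : ℂ)) • x) (key i)
        simp only [smul_sub, smul_add, smul_smul] at h
        exact h
      rw [Finset.sum_congr rfl hterm, Finset.sum_add_distrib]
      -- second sum: peel off the i = 0 term
      rw [Finset.sum_range_succ' (fun i =>
        ((S (k + 1) (i + 1) : ℂ) * (((i + 1 : ℕ) : ℂ) * ((i + 1 : ℕ) : ℂ)))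
          • (aOp ^ i * bOp ^ i)) k]
      have h0 : ((S (k + 1) (0 + 1) : ℂ) * (((0 + 1 : ℕ) : ℂ) * ((0 + 1 : ℕ) : ℂ)))
          • (aOp ^ 0 * bOp ^ 0) = 1 := by
        rw [S_one S hS0 hSrec hSlt (k + 1) (by omega)]
        simp
      rw [h0]
      -- extend the shifted sum back to range (k+1) using the vanishing top term
      have hext : (∑ i ∈ Finset.range k,
            ((S (k + 1) (i + 1 + 1) : ℂ) * (((i + 1 + 1 : ℕ) : ℂ) * ((i + 1 + 1 : ℕ) : ℂ)))
              • (aOp ^ (i + 1) * bOp ^ (i + 1)))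
          = ∑ i ∈ Finset.range (k + 1),
            ((S (k + 1) (i + 1 + 1) : ℂ) * (((i + 1 + 1 : ℕ) : ℂ) * ((i + 1 + 1 : ℕ) : ℂ)))
              • (aOp ^ (i + 1) * bOp ^ (i + 1)) := by
        rw [Finset.sum_range_succ]
        have : S (k + 1) (k + 1 + 1) = 0 := hSlt _ _ (by omega)
        rw [this]
        simp
      rw [hext]
      rw [add_comm (∑ i ∈ Finset.range (k + 1),
            ((S (k + 1) (i + 1 + 1) : ℂ) * (((i + 1 + 1 : ℕ) : ℂ) * ((i + 1 + 1 : ℕ) : ℂ)))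
              • (aOp ^ (i + 1) * bOp ^ (i + 1))) 1,
        ← add_assoc, add_comm _ (1 : Module.End ℂ (Polynomial ℂ)), add_assoc]
      congr 1
      rw [← Finset.sum_add_distrib]
      refine Finset.sum_congr rfl fun i _ => ?_
      rw [← add_smul]
      congr 1
      have hrec : S (k + 2) (i + 2) = (i + 2) * S (k + 1) (i + 2) + S (k + 1) (i + 1) := by
        have h := hSrec (k + 2) (i + 2) (by omega) (by omega)
        simpa using h
      have hidx : i + 1 + 1 = i + 2 := rfl
      rw [hidx]
      push_cast [hrec]
      ring
  intro p
  rw [main]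
  simp only [LinearMap.add_apply, Module.End.one_apply, LinearMap.sum_apply,
    LinearMap.smul_apply, Nat.cast_mul, Nat.cast_add, Nat.cast_one]
end

section
/- Let m ≥ 2 be an integer, let (η_n)_{n≥0} be an orthonormal basis of L²(ℝ, dt) such that there exists C > 0 with |η_n(t)| ≤ C for all n ∈ ℕ and t ∈ ℝ, and set h_m(z,t) = ∑_{n=0}^∞ (z^n/(n!)^{m/2}) η_n(t). Then an entire function f(z) = ∑_{n=0}^∞ a_n z^n satisfies ∑_{n=0}^∞ |a_n|² (n!)^m < ∞ if and only if there exists g ∈ L²(ℝ, dt) such that f(z) = ∫_ℝ h_m(z,t) g(t) dt for every z ∈ ℂ. -/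
open MeasureTheory

open scoped InnerProductSpace ENNReal NNReal

section Aux

/-- Uniqueness of power series coefficients for entire functions on `ℂ`. -/
lemma bargmann_coeff_unique {f : ℂ → ℂ} {c c' : ℕ → ℂ}
    (h : ∀ z, HasSum (fun n => c n * z ^ n) (f z))
    (h' : ∀ z, HasSum (fun n => c' n * z ^ n) (f z)) : c = c' := by
  have key : ∀ (b : ℕ → ℂ), (∀ z, HasSum (fun n => b n * z ^ n) (f z)) →
      HasFPowerSeriesAt f (FormalMultilinearSeries.ofScalars ℂ b) 0 := by
    intro b hb
    have hnorm : ∀ n, ‖FormalMultilinearSeries.ofScalars ℂ b n‖ = ‖b n‖ := fun n =>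
      FormalMultilinearSeries.ofScalars_norm ℂ b n
    have hsummb : Summable fun n => ‖b n‖ := by
      have h2 : Summable fun n => ‖b n * (2 : ℂ) ^ n‖ :=
        summable_norm_iff.mpr (hb 2).summable
      refine Summable.of_nonneg_of_le (fun n => norm_nonneg _) (fun n => ?_) h2
      rw [norm_mul, norm_pow]
      have h1 : (1:ℝ) ≤ ‖(2:ℂ)‖ := by norm_num
      calc ‖b n‖ = ‖b n‖ * 1 := (mul_one _).symm
        _ ≤ ‖b n‖ * ‖(2:ℂ)‖ ^ n := by gcongr; exact one_le_pow₀ h1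
    refine ⟨1, ?_, one_pos, fun {y} _ => ?_⟩
    · have : ((1:ℝ≥0) : ℝ≥0∞) ≤ (FormalMultilinearSeries.ofScalars ℂ b).radius := by
        refine FormalMultilinearSeries.le_radius_of_summable _ ?_
        simpa [hnorm] using hsummb
      simpa using this
    · rw [zero_add]
      have h1 : (fun n => FormalMultilinearSeries.ofScalars ℂ b n fun _ => y)
          = fun n => b n * y ^ n := by
        funext n
        rw [FormalMultilinearSeries.ofScalars_apply_eq, smul_eq_mul]
      rw [h1]
      exact hb y
  have heq := (key c h).eq_formalMultilinearSeries (key c' h')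
  exact FormalMultilinearSeries.ofScalars_series_injective ℂ ℂ heq

lemma bargmann_dpos (m n : ℕ) : (0:ℝ) < (Nat.factorial n : ℝ) ^ ((m : ℝ) / 2) :=
  Real.rpow_pos_of_pos (by exact_mod_cast Nat.factorial_pos n) _

lemma bargmann_dsq (m n : ℕ) :
    ((Nat.factorial n : ℝ) ^ ((m : ℝ) / 2)) ^ 2 = (Nat.factorial n : ℝ) ^ m := by
  have h0 : (0:ℝ) ≤ (Nat.factorial n : ℝ) := by positivity
  rw [← Real.rpow_natCast ((Nat.factorial n : ℝ) ^ ((m : ℝ) / 2)) 2,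
    ← Real.rpow_mul h0, Nat.cast_ofNat, div_mul_cancel₀ _ (two_ne_zero), Real.rpow_natCast]

lemma bargmann_d_ge (m n : ℕ) (hm : 2 ≤ m) :
    (Nat.factorial n : ℝ) ≤ (Nat.factorial n : ℝ) ^ ((m : ℝ) / 2) := by
  have h1 : (1:ℝ) ≤ (Nat.factorial n : ℝ) := by
    exact_mod_cast Nat.one_le_iff_ne_zero.mpr (Nat.factorial_pos n).ne'
  calc (Nat.factorial n : ℝ) = (Nat.factorial n : ℝ) ^ (1:ℝ) := (Real.rpow_one _).symm
    _ ≤ _ := by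
        apply Real.rpow_le_rpow_of_exponent_le h1
        have : (2:ℝ) ≤ (m:ℝ) := by exact_mod_cast hm
        linarith

lemma bargmann_norm_w (m n : ℕ) (z : ℂ) :
    ‖z ^ n / (((Nat.factorial n : ℝ) ^ ((m : ℝ) / 2) : ℝ) : ℂ)‖
      = ‖z‖ ^ n / (Nat.factorial n : ℝ) ^ ((m : ℝ) / 2) := by
  rw [norm_div, norm_pow, Complex.norm_real, Real.norm_eq_abs,
    abs_of_pos (bargmann_dpos m n)]

lemma bargmann_summable_w (m : ℕ) (hm : 2 ≤ m) (z : ℂ) :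
    Summable (fun n => ‖z ^ n / (((Nat.factorial n : ℝ) ^ ((m : ℝ) / 2) : ℝ) : ℂ)‖) := by
  refine Summable.of_nonneg_of_le (fun n => norm_nonneg _) (fun n => ?_)
    (Real.summable_pow_div_factorial ‖z‖)
  rw [bargmann_norm_w]
  have h1 : (0:ℝ) < (Nat.factorial n : ℝ) := by exact_mod_cast Nat.factorial_pos n
  exact div_le_div_of_nonneg_left (by positivity) h1 (bargmann_d_ge m n hm)

end Aux

/-- Generalized Bargmann transform characterization of `F_m`, `m ≥ 2`: given an
orthonormal basis `(ηₙ)` of `L²(ℝ, dt)` uniformly bounded by `C > 0`, and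
`h_m(z,t) = ∑ₙ (zⁿ/(n!)^{m/2}) ηₙ(t)`, an entire function `f(z) = ∑ₙ aₙ zⁿ` satisfies
`∑ₙ |aₙ|²(n!)^m < ∞` iff `f(z) = ∫_ℝ h_m(z,t) g(t) dt` for some `g ∈ L²(ℝ, dt)`. -/
theorem mem_Fock_iff_bargmann (m : ℕ) (hm : 2 ≤ m) (η : ℕ → ℝ → ℝ) (C : ℝ) (hC : 0 < C)
    (hbound : ∀ (n : ℕ) (t : ℝ), |η n t| ≤ C)
    (hL2 : ∀ n : ℕ, MemLp (η n) 2 (volume : Measure ℝ))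
    (horth : ∀ n k : ℕ, ∫ t : ℝ, η n t * η k t = if n = k then 1 else 0)
    (hcomplete : ∀ g : ℝ → ℂ, MemLp g 2 (volume : Measure ℝ) →
      (∀ n : ℕ, ∫ t : ℝ, g t * (η n t : ℂ) = 0) → g =ᵐ[volume] 0)
    (f : ℂ → ℂ) (a : ℕ → ℂ)
    (hf : ∀ z : ℂ, HasSum (fun n : ℕ => a n * z ^ n) (f z)) :
    (Summable fun n : ℕ => ‖a n‖ ^ 2 * (Nat.factorial n : ℝ) ^ m) ↔
      ∃ g : ℝ → ℂ, MemLp g 2 (volume : Measure ℝ) ∧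
        ∀ z : ℂ, f z =
          ∫ t : ℝ,
            (∑' n : ℕ,
              z ^ n / (((Nat.factorial n : ℝ) ^ ((m : ℝ) / 2) : ℝ) : ℂ) * (η n t : ℂ)) *
            g t := by
  classical
  set d : ℕ → ℝ := fun n => (Nat.factorial n : ℝ) ^ ((m : ℝ) / 2) with hd
  set w : ℂ → ℕ → ℂ := fun z n => z ^ n / ((d n : ℝ) : ℂ) with hwdef
  set ηC : ℕ → ℝ → ℂ := fun n t => (η n t : ℂ) with hηCdef
  have hηC : ∀ n, MemLp (ηC n) 2 (volume : Measure ℝ) := fun n => (hL2 n).ofReal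
  set e : ℕ → Lp ℂ 2 (volume : Measure ℝ) := fun n => (hηC n).toLp (ηC n) with he
  have hd0 : ∀ n, ((d n : ℝ) : ℂ) ≠ 0 := fun n =>
    Complex.ofReal_ne_zero.mpr (bargmann_dpos m n).ne'
  -- inner products in L² are integrals
  have hinner : ∀ (n : ℕ) (G : Lp ℂ 2 (volume : Measure ℝ)),
      ⟪e n, G⟫_ℂ = ∫ t : ℝ, ηC n t * G t := by
    intro n G
    rw [L2.inner_def]
    refine integral_congr_ae ?_
    filter_upwards [(hηC n).coeFn_toLp] with t ht
    rw [RCLike.inner_apply, he] at *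
    rw [ht]
    simp [hηCdef, Complex.conj_ofReal, mul_comm]
  -- orthonormality in L²
  have horthC : Orthonormal ℂ e := by
    rw [orthonormal_iff_ite]
    intro n k
    rw [hinner n (e k)]
    have h1 : ∫ t : ℝ, ηC n t * (e k) t = ∫ t : ℝ, ((η n t * η k t : ℝ) : ℂ) := by
      refine integral_congr_ae ?_
      filter_upwards [(hηC k).coeFn_toLp] with t ht
      rw [ht]
      push_cast [hηCdef]
      ring
    have h2 : (∫ t : ℝ, ((η n t * η k t : ℝ) : ℂ)) = ((∫ t : ℝ, η n t * η k t : ℝ) : ℂ) :=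
      integral_ofReal (𝕜 := ℂ) (f := fun t => η n t * η k t)
    rw [h1, h2, horth n k]
    split_ifs <;> simp
  have hnorm1 : ∀ n, ‖e n‖ = 1 := fun n => horthC.1 n
  -- the key pairing computation
  have key : ∀ (z : ℂ) (g : ℝ → ℂ), MemLp g 2 (volume : Measure ℝ) →
      (∫ t : ℝ, (∑' n : ℕ, w z n * ηC n t) * g t)
        = ∑' n : ℕ, w z n * ∫ t : ℝ, ηC n t * g t := by
    intro z g hg
    have hsm : ∀ n : ℕ, AEStronglyMeasurable (fun t => w z n * ηC n t * g t)
        (volume : Measure ℝ) := fun n =>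
      (aestronglyMeasurable_const.mul (hηC n).aestronglyMeasurable).mul hg.aestronglyMeasurable
    have hη1 : ∀ n, eLpNorm (ηC n) 2 (volume : Measure ℝ) = 1 := by
      intro n
      have h1 : ‖e n‖ = 1 := hnorm1 n
      rw [he, Lp.norm_def, eLpNorm_congr_ae (hηC n).coeFn_toLp] at h1
      exact (ENNReal.toReal_eq_one_iff _).mp h1
    have hbd : ∀ n, (∫⁻ t : ℝ, ‖w z n * ηC n t * g t‖₊ ∂(volume : Measure ℝ))
        ≤ (‖w z n‖₊ : ℝ≥0∞) * eLpNorm g 2 (volume : Measure ℝ) := by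
      intro n
      refine (eLpNorm_one_eq_lintegral_enorm (f := fun t => w z n * ηC n t * g t)).symm.trans_le ?_
      have h2 : eLpNorm (fun t => (w z n * ηC n t) * g t) 1 (volume : Measure ℝ)
          ≤ eLpNorm (fun t => w z n * ηC n t) 2 (volume : Measure ℝ)
            * eLpNorm g 2 (volume : Measure ℝ) := by
        have := eLpNorm_le_eLpNorm_mul_eLpNorm'_of_norm (p := 2) (q := 2) (r := 1)
          (f := fun t => w z n * ηC n t) (g := g)
          (aestronglyMeasurable_const.mul (hηC n).aestronglyMeasurable)
          hg.aestronglyMeasurable (· * ·) 1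
          (Filter.Eventually.of_forall fun t => by simp [norm_mul])
        rwa [ENNReal.coe_one, one_mul] at this
      refine h2.trans ?_
      have h3 : eLpNorm (fun t => w z n * ηC n t) 2 (volume : Measure ℝ)
          ≤ (‖w z n‖₊ : ℝ≥0∞) * eLpNorm (ηC n) 2 (volume : Measure ℝ) := by
        have := eLpNorm_const_smul_le (c := w z n) (f := ηC n) (p := 2)
          (μ := (volume : Measure ℝ))
        exact this
      calc eLpNorm (fun t => w z n * ηC n t) 2 (volume : Measure ℝ)
            * eLpNorm g 2 (volume : Measure ℝ)
          ≤ ((‖w z n‖₊ : ℝ≥0∞) * eLpNorm (ηC n) 2 (volume : Measure ℝ))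
            * eLpNorm g 2 (volume : Measure ℝ) := by gcongr
        _ = (‖w z n‖₊ : ℝ≥0∞) * eLpNorm g 2 (volume : Measure ℝ) := by
            rw [hη1 n, mul_one]
    have hsummw : Summable fun n => ‖w z n‖₊ := by
      rw [← NNReal.summable_coe]
      exact (bargmann_summable_w m hm z).congr fun n => (coe_nnnorm _).symm
    have hne : (∑' n : ℕ, ∫⁻ t : ℝ, ‖w z n * ηC n t * g t‖₊ ∂(volume : Measure ℝ)) ≠ ⊤ := by
      refine ne_top_of_le_ne_top ?_ (ENNReal.tsum_le_tsum hbd)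
      rw [ENNReal.tsum_mul_right]
      exact ENNReal.mul_ne_top (ENNReal.tsum_coe_ne_top_iff_summable.mpr hsummw)
        hg.eLpNorm_ne_top
    calc (∫ t : ℝ, (∑' n : ℕ, w z n * ηC n t) * g t)
        = ∫ t : ℝ, ∑' n : ℕ, w z n * ηC n t * g t := by
          refine integral_congr_ae (Filter.Eventually.of_forall fun t => ?_)
          exact (tsum_mul_right).symm
      _ = ∑' n : ℕ, ∫ t : ℝ, w z n * ηC n t * g t := integral_tsum hsm hne
      _ = ∑' n : ℕ, w z n * ∫ t : ℝ, ηC n t * g t := by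
          refine tsum_congr fun n => ?_
          simp_rw [mul_assoc]
          exact integral_const_mul _ _
  constructor
  · -- forward direction
    intro hsumm
    set c : ℕ → ℂ := fun n => a n * ((d n : ℝ) : ℂ) with hc
    have hc2 : Summable fun n => ‖c n‖ ^ 2 := by
      refine hsumm.congr fun n => ?_
      rw [hc]
      simp only
      rw [norm_mul, Complex.norm_real, Real.norm_eq_abs, abs_of_pos (bargmann_dpos m n),
        mul_pow, bargmann_dsq m n]
    have hGsumm : Summable (fun n => c n • e n) := by
      have h1 := (horthC.orthogonalFamily.summable_iff_norm_sq_summable c).mpr hc2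
      refine h1.congr fun n => ?_
      rw [LinearIsometry.toSpanSingleton_apply]
    obtain ⟨G, hGsum⟩ := hGsumm
    refine ⟨⇑G, Lp.memLp G, fun z => ?_⟩
    rw [key z ⇑G (Lp.memLp G)]
    have hb : ∀ n, (∫ t : ℝ, ηC n t * G t) = c n := by
      intro n
      rw [← hinner n G]
      have h1 : HasSum (fun k => ⟪e n, c k • e k⟫_ℂ) ⟪e n, G⟫_ℂ :=
        (innerSL ℂ (e n)).hasSum hGsum
      have h2 : (fun k => ⟪e n, c k • e k⟫_ℂ) = fun k => if k = n then c n else 0 := by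
        funext k
        rw [inner_smul_right, orthonormal_iff_ite.mp horthC n k]
        by_cases h : k = n
        · subst h; simp
        · simp [h, Ne.symm h]
      rw [h2] at h1
      exact h1.unique (hasSum_ite_eq n (c n))
    have h3 : ∀ n, w z n * (∫ t : ℝ, ηC n t * G t) = a n * z ^ n := by
      intro n
      rw [hb n]
      show z ^ n / ((d n : ℝ) : ℂ) * (a n * ((d n : ℝ) : ℂ)) = a n * z ^ n
      calc z ^ n / ((d n : ℝ) : ℂ) * (a n * ((d n : ℝ) : ℂ))
          = a n * z ^ n * (((d n : ℝ) : ℂ) * (((d n : ℝ) : ℂ))⁻¹) := by ring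
        _ = a n * z ^ n := by rw [mul_inv_cancel₀ (hd0 n), mul_one]
    rw [tsum_congr h3, (hf z).tsum_eq]
  · -- backward direction
    rintro ⟨g, hg, hrep⟩
    set G : Lp ℂ 2 (volume : Measure ℝ) := hg.toLp g with hGdef
    have hgG : ∀ n, (∫ t : ℝ, ηC n t * g t) = ⟪e n, G⟫_ℂ := by
      intro n
      rw [hinner n G]
      refine integral_congr_ae ?_
      filter_upwards [hg.coeFn_toLp] with t ht
      rw [ht]
    have hrep' : ∀ z : ℂ, f z = ∑' n : ℕ, w z n * ⟪e n, G⟫_ℂ := by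
      intro z
      rw [hrep z, key z g hg]
      exact tsum_congr fun n => by rw [hgG n]
    have hsum2 : ∀ z : ℂ, Summable fun n => (⟪e n, G⟫_ℂ / ((d n : ℝ) : ℂ)) * z ^ n := by
      intro z
      refine Summable.of_norm_bounded
        ((Real.summable_pow_div_factorial ‖z‖).mul_left ‖G‖) fun n => ?_
      have hb1 : ‖⟪e n, G⟫_ℂ‖ ≤ ‖G‖ := by
        simpa [hnorm1 n] using norm_inner_le_norm (𝕜 := ℂ) (e n) G
      rw [norm_mul, norm_div, norm_pow]
      have h1 : (0:ℝ) < (Nat.factorial n : ℝ) := by exact_mod_cast Nat.factorial_pos n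
      have h2 : ‖(((d n : ℝ)) : ℂ)‖ = d n := by
        rw [Complex.norm_real, Real.norm_eq_abs, abs_of_pos (bargmann_dpos m n)]
      rw [h2]
      calc ‖⟪e n, G⟫_ℂ‖ / d n * ‖z‖ ^ n ≤ ‖G‖ / (Nat.factorial n : ℝ) * ‖z‖ ^ n := by
            gcongr
            exact bargmann_d_ge m n hm
        _ = ‖G‖ * (‖z‖ ^ n / (Nat.factorial n : ℝ)) := by ring
    have hHas : ∀ z : ℂ, HasSum (fun n => (⟪e n, G⟫_ℂ / ((d n : ℝ) : ℂ)) * z ^ n) (f z) := by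
      intro z
      rw [(hsum2 z).hasSum_iff]
      rw [hrep' z]
      exact tsum_congr fun n => by rw [hwdef]; simp only; ring
    have hac : a = fun n => ⟪e n, G⟫_ℂ / ((d n : ℝ) : ℂ) := bargmann_coeff_unique hf hHas
    refine (horthC.inner_products_summable G).congr fun n => ?_
    rw [hac]
    simp only
    rw [norm_div, div_pow]
    have h2 : ‖(((d n : ℝ)) : ℂ)‖ = d n := by
      rw [Complex.norm_real, Real.norm_eq_abs, abs_of_pos (bargmann_dpos m n)]
    rw [h2, bargmann_dsq m n]
    field_simp
end
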